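/- arXiv:1905.00177 — 3 statements merged into one kernel-verified Lean document; each statement's English description precedes it below -/
import Mathlib

section
/- Let V and R be as in the context, with V ≤ R ≤ J almost surely and P(R ≥ 1) > 0. Then pFDR ≥ (1/J)·FWE₁, i.e. E[(V/R)·1{R ≥ 1}] / P(R ≥ 1) ≥ (1/J)·P(V ≥ 1). -/
open MeasureTheory

/-- pFDR ≥ (1/J)·FWE₁:
`E[(V/R)·1{R ≥ 1}] / P(R ≥ 1) ≥ (1/J)·P(V ≥ 1)` when `V ≤ R ≤ J` a.s. and `P(R ≥ 1) > 0`. -/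
theorem stmt6 {Ω : Type*} [MeasurableSpace Ω] (P : Measure Ω) [IsProbabilityMeasure P]
    (J : ℕ) (hJ : 1 ≤ J) (V R : Ω → ℕ) (hV : Measurable V) (hR : Measurable R)
    (hVR : ∀ᵐ ω ∂P, V ω ≤ R ω) (hRJ : ∀ᵐ ω ∂P, R ω ≤ J) (hpos : 0 < P {ω | 1 ≤ R ω}) :
    (1 / (J : ℝ)) * (P {ω | 1 ≤ V ω}).toReal
      ≤ (∫ ω, (if 1 ≤ R ω then (V ω : ℝ) / (R ω : ℝ) else 0) ∂P)
          / (P {ω | 1 ≤ R ω}).toReal := by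
  set f : Ω → ℝ := fun ω => if 1 ≤ R ω then (V ω : ℝ) / (R ω : ℝ) else 0 with hf
  have hmeasV : MeasurableSet {ω | 1 ≤ V ω} := hV measurableSet_Ici
  have hmeasR : MeasurableSet {ω | 1 ≤ R ω} := hR measurableSet_Ici
  have hfmeas : Measurable f := by
    apply Measurable.ite hmeasR
    · exact (measurable_from_nat.comp hV).div (measurable_from_nat.comp hR)
    · exact measurable_const
  have hfbound : ∀ᵐ ω ∂P, ‖f ω‖ ≤ 1 := by
    filter_upwards [hVR] with ω hvr
    simp only [hf]
    split_ifs with h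
    · rw [Real.norm_eq_abs, abs_of_nonneg (by positivity)]
      exact div_le_one_of_le₀ (by exact_mod_cast hvr) (by positivity)
    · simp
  have hfint : Integrable f P := by
    refine Integrable.mono' (integrable_const 1) hfmeas.aestronglyMeasurable hfbound
  -- g = indicator of {V ≥ 1} times 1/J
  set g : Ω → ℝ := Set.indicator {ω | 1 ≤ V ω} (fun _ => 1 / (J : ℝ)) with hg
  have hgint : Integrable g P :=
    (integrable_const (1 / (J : ℝ))).indicator hmeasV
  have hgle : ∀ᵐ ω ∂P, g ω ≤ f ω := by
    filter_upwards [hVR, hRJ] with ω hvr hrj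
    simp only [hg, hf, Set.indicator]
    split_ifs with h1 h2
    · -- 1 ≤ V, 1 ≤ R
      have hV1 : (1 : ℝ) ≤ (V ω : ℝ) := by exact_mod_cast h1
      have hR0 : (0 : ℝ) < (R ω : ℝ) := by
        have : 1 ≤ R ω := le_trans h1 hvr
        exact_mod_cast this
      have hJ0 : (0 : ℝ) < (J : ℝ) := by exact_mod_cast hJ
      rw [div_le_div_iff₀ hJ0 hR0]
      have : (R ω : ℝ) ≤ (J : ℝ) := by exact_mod_cast hrj
      nlinarith
    · exact absurd (le_trans h1 hvr) h2
    · positivity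
    · exact le_rfl
  have hint_le : ∫ ω, g ω ∂P ≤ ∫ ω, f ω ∂P := integral_mono_ae hgint hfint hgle
  have hgval : ∫ ω, g ω ∂P = (1 / (J : ℝ)) * (P {ω | 1 ≤ V ω}).toReal := by
    rw [hg, integral_indicator_const _ hmeasV]
    simp [mul_comm, Measure.real]
  have hfnonneg : 0 ≤ ∫ ω, f ω ∂P := by
    apply integral_nonneg
    intro ω
    simp only [hf]
    split_ifs
    · positivity
    · exact le_rfl
  have hPRpos : 0 < (P {ω | 1 ≤ R ω}).toReal :=
    ENNReal.toReal_pos hpos.ne' (measure_ne_top P _)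
  have hPRle1 : (P {ω | 1 ≤ R ω}).toReal ≤ 1 := by
    rw [← ENNReal.toReal_one]
    exact ENNReal.toReal_mono ENNReal.one_ne_top prob_le_one
  rw [le_div_iff₀ hPRpos]
  calc (1 / (J : ℝ)) * (P {ω | 1 ≤ V ω}).toReal * (P {ω | 1 ≤ R ω}).toReal
      ≤ (1 / (J : ℝ)) * (P {ω | 1 ≤ V ω}).toReal * 1 := by
        apply mul_le_mul_of_nonneg_left hPRle1
        positivity
    _ = ∫ ω, g ω ∂P := by rw [mul_one, hgval]
    _ ≤ ∫ ω, f ω ∂P := hint_le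
end

section
/- Fix integers 0 ≤ ℓ < u ≤ J and α, β ∈ (0,1), and set the thresholds a = |log β| + log J, b = |log α| + log J, c = |log α| + log((J−ℓ)J), d = |log β| + log(uJ). Then for every signal set A ⊆ {1,…,J} with ℓ ≤ |A| ≤ u, the gap-intersection rule with these thresholds terminates P_A-almost surely and satisfies FDR_A ≤ α and FNR_A ≤ β; that is, the gap-intersection rule with these thresholds is admissible for FDR/FNR control over the class of signal sets A with ℓ ≤ |A| ≤ u. -/
open Filter MeasureTheory ProbabilityTheory

/-- The log-likelihood ratio at time `n` of a stream: the log of the Radon–Nikodym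
derivative of the law of the first `n` observations under `P1` with respect to that
under `P0`, evaluated at the observed stream `x`. -/
noncomputable def llr {E : Type*} [MeasurableSpace E] (P0 P1 : Measure (ℕ → E)) (n : ℕ)
    (x : ℕ → E) : ℝ :=
  Real.log (((P1.map fun y (i : Fin n) => y i).rnDeriv (P0.map fun y (i : Fin n) => y i)
      fun i : Fin n => x i).toReal)

/-- `orderStat x k` is the `k`-th largest (1-indexed) of the values `x j`, `j ∈ Fin J`. -/
noncomputable def orderStat {J : ℕ} (x : Fin J → ℝ) (k : ℕ) : ℝ :=
  ((Multiset.ofList (List.ofFn x)).sort (· ≤ ·)).getD (J - k) 0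

/-- The set of the `m` indices `j` with the largest values `x j`, ties broken in favor of
the smallest index. -/
noncomputable def topM {J : ℕ} (x : Fin J → ℝ) (m : ℕ) : Finset (Fin J) :=
  ((@List.insertionSort (Fin J) (fun j k => x k < x j ∨ (x j = x k ∧ j ≤ k))
      (Classical.decRel _) (List.finRange J)).take m).toFinset

/-- `pcount x` is the number of indices `j` with `x j > 0`. -/
noncomputable def pcount {J : ℕ} (x : Fin J → ℝ) : ℕ :=
  (Finset.univ.filter fun j => 0 < x j).card

/-- The stopping condition of the gap-intersection rule at a fixed time, for the values
`x : Fin J → ℝ` of the log-likelihood ratio statistics: the disjunction of the stopping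
criteria of `τ₁`, `τ₂` and `τ₃`.  The conventions `λ⁽⁰⁾ = +∞` and `λ⁽ᴶ⁺¹⁾ = −∞` are
encoded by the disjuncts `l = 0` and `u = J` (the gap conditions involving them hold
automatically). -/
noncomputable def giCond {J : ℕ} (x : Fin J → ℝ) (l u : ℕ) (a b c d : ℝ) : Prop :=
  (orderStat x (l + 1) ≤ -a ∧ (l = 0 ∨ c ≤ orderStat x l - orderStat x (l + 1))) ∨
  (l ≤ pcount x ∧ pcount x ≤ u ∧ ∀ j, x j ∉ Set.Ioo (-a) b) ∨
  (b ≤ orderStat x u ∧ (u = J ∨ d ≤ orderStat x u - orderStat x (u + 1)))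

/-- The gap-intersection stopping time `T_GI = min(τ₁, τ₂, τ₃)`
(`= 0`, the infimum of the empty set of naturals, if the rule never stops). -/
noncomputable def giT {J : ℕ} (lam : Fin J → ℕ → ℝ) (l u : ℕ) (a b c d : ℝ) : ℕ :=
  sInf {n | 1 ≤ n ∧ giCond (fun j => lam j n) l u a b c d}

/-- The number `p′ = max(ℓ, min(u, p(T_GI)))` of null hypotheses rejected by the
gap-intersection rule. -/
noncomputable def giR {J : ℕ} (lam : Fin J → ℕ → ℝ) (l u : ℕ) (a b c d : ℝ) : ℕ :=
  max l (min u (pcount fun j => lam j (giT lam l u a b c d)))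

/-- The rejection set of the gap-intersection rule: the `p′` indices with the largest
log-likelihood ratios at time `T_GI`, ties broken in favor of the smallest index. -/
noncomputable def giD {J : ℕ} (lam : Fin J → ℕ → ℝ) (l u : ℕ) (a b c d : ℝ) :
    Finset (Fin J) :=
  topM (fun j => lam j (giT lam l u a b c d)) (giR lam l u a b c d)

/-! ### Auxiliary list lemmas -/

namespace GIAux

lemma getElem_congr' {α : Type*} (l : List α) {i j : ℕ} (h : i = j) (hi : i < l.length) :
    l[i]'hi = l[j]'(h ▸ hi) := by subst h; rfl

variable {J : ℕ} (x : Fin J → ℝ)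

/-- The ranking relation. -/
def rr (x : Fin J → ℝ) (j k : Fin J) : Prop := x k < x j ∨ (x j = x k ∧ j ≤ k)

noncomputable def giList : List (Fin J) :=
  @List.insertionSort (Fin J) (fun j k => x k < x j ∨ (x j = x k ∧ j ≤ k))
      (Classical.decRel _) (List.finRange J)

lemma topM_eq (m : ℕ) : topM x m = ((giList x).take m).toFinset := rfl

lemma rr_total (j k : Fin J) : rr x j k ∨ rr x k j := by
  rcases lt_trichotomy (x j) (x k) with h | h | h
  · exact Or.inr (Or.inl h)
  · rcases le_total j k with hjk | hjk
    · exact Or.inl (Or.inr ⟨h, hjk⟩)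
    · exact Or.inr (Or.inr ⟨h.symm, hjk⟩)
  · exact Or.inl (Or.inl h)

lemma rr_trans (j k m : Fin J) : rr x j k → rr x k m → rr x j m := by
  rintro (h1 | ⟨h1, h1'⟩) (h2 | ⟨h2, h2'⟩)
  · exact Or.inl (h2.trans h1)
  · exact Or.inl (h2 ▸ h1)
  · exact Or.inl (lt_of_lt_of_eq h2 h1.symm)
  · exact Or.inr ⟨h1.trans h2, h1'.trans h2'⟩

lemma giList_perm : (giList x).Perm (List.finRange J) :=
  @List.perm_insertionSort _ _ (Classical.decRel _) _

lemma length_giList : (giList x).length = J := by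
  simpa using (giList_perm x).length_eq

lemma nodup_giList : (giList x).Nodup :=
  (giList_perm x).nodup_iff.2 (List.nodup_finRange J)

lemma mem_giList (j : Fin J) : j ∈ giList x :=
  (giList_perm x).mem_iff.2 (List.mem_finRange j)

lemma sorted_giList : (giList x).Pairwise (rr x) := by
  haveI h1 : Std.Total (α := Fin J) (fun j k => x k < x j ∨ (x j = x k ∧ j ≤ k)) := ⟨rr_total x⟩
  haveI h2 : IsTrans (Fin J) (fun j k => x k < x j ∨ (x j = x k ∧ j ≤ k)) := ⟨rr_trans x⟩
  exact @List.pairwise_insertionSort (Fin J) (fun j k => x k < x j ∨ (x j = x k ∧ j ≤ k))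
    (Classical.decRel _) h1 h2 (List.finRange J)

lemma giList_getElem_le {i1 i2 : ℕ} (h12 : i1 ≤ i2) (h2 : i2 < J) :
    x ((giList x)[i2]'(by rw [length_giList]; exact h2)) ≤
      x ((giList x)[i1]'(by rw [length_giList]; exact lt_of_le_of_lt h12 h2)) := by
  rcases eq_or_lt_of_le h12 with rfl | h12
  · exact le_refl _
  · have := (List.pairwise_iff_getElem.1 (sorted_giList x)) i1 i2
      (by rw [length_giList]; exact lt_of_le_of_lt h12.le h2)
      (by rw [length_giList]; exact h2) h12
    rcases this with h | ⟨h, _⟩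
    · exact h.le
    · exact h.ge

lemma orderStat_eq_getElem {k : ℕ} (hk1 : 1 ≤ k) (hkJ : k ≤ J) :
    orderStat x k = x ((giList x)[k - 1]'(by rw [length_giList]; omega)) := by
  have hlen : ((giList x).map x).length = J := by
    rw [List.length_map, length_giList]
  have hsorted : (((giList x).map x).reverse).Pairwise (· ≤ ·) := by
    rw [List.pairwise_reverse]
    refine List.Pairwise.map x (fun j k hjk => ?_) (sorted_giList x)
    rcases hjk with h | ⟨h, _⟩
    · exact h.le
    · exact h.ge
  have hperm : (Multiset.ofList (List.ofFn x)).sort (· ≤ ·) =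
      (((giList x).map x).reverse) := by
    refine List.Perm.eq_of_pairwise' (Multiset.pairwise_sort _ _) hsorted ?_
    have h0 : ((Multiset.ofList (List.ofFn x)).sort (· ≤ ·) : List ℝ).Perm (List.ofFn x) :=
      Quotient.exact (Multiset.sort_eq (Multiset.ofList (List.ofFn x)) (· ≤ ·))
    refine h0.trans ?_
    rw [List.ofFn_eq_map]
    exact ((List.reverse_perm _).trans ((giList_perm x).map x)).symm
  rw [orderStat, hperm]
  have hJk : J - k < (((giList x).map x).reverse).length := by
    rw [List.length_reverse, hlen]; omega
  rw [List.getD_eq_getElem _ _ hJk, List.getElem_reverse, List.getElem_map]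
  congr 1
  have hidx : ((giList x).map x).length - 1 - (J - k) = k - 1 := by rw [hlen]; omega
  exact getElem_congr' _ hidx _


lemma card_topM (m : ℕ) : (topM x m).card = min m J := by
  rw [topM_eq, List.toFinset_card_of_nodup ((nodup_giList x).sublist (List.take_sublist _ _)),
    List.length_take, length_giList]

lemma orderStat_le_of_mem_topM {m : ℕ} (hm1 : 1 ≤ m) (hmJ : m ≤ J) {j : Fin J}
    (hj : j ∈ topM x m) : orderStat x m ≤ x j := by
  rw [topM_eq, List.mem_toFinset, List.mem_iff_getElem] at hj
  obtain ⟨i, hi, hij⟩ := hj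
  have hi' : i < min m J := by rwa [List.length_take, length_giList] at hi
  rw [List.getElem_take] at hij
  rw [orderStat_eq_getElem x hm1 hmJ, ← hij]
  exact giList_getElem_le x (show i ≤ m - 1 by omega) (by omega)

lemma le_orderStat_of_not_mem_topM {m : ℕ} (hmJ : m < J) {j : Fin J}
    (hj : j ∉ topM x m) : x j ≤ orderStat x (m + 1) := by
  obtain ⟨i, hi, hij⟩ := List.mem_iff_getElem.1 (mem_giList x j)
  have hi' : i < J := by rwa [length_giList] at hi
  have him : m ≤ i := by
    by_contra h
    push_neg at h
    refine hj ?_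
    rw [topM_eq, List.mem_toFinset, List.mem_iff_getElem]
    exact ⟨i, by rw [List.length_take, length_giList]; omega,
      by rw [List.getElem_take]; exact hij⟩
  rw [orderStat_eq_getElem x (by omega) (by omega), ← hij]
  exact giList_getElem_le x him hi'

lemma le_of_mem_topM_of_not_mem {m : ℕ} {j k : Fin J} (hj : j ∈ topM x m)
    (hk : k ∉ topM x m) : x k ≤ x j := by
  rw [topM_eq, List.mem_toFinset, List.mem_iff_getElem] at hj
  obtain ⟨i1, hi1, hij⟩ := hj
  have hi1' : i1 < min m J := by rwa [List.length_take, length_giList] at hi1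
  rw [List.getElem_take] at hij
  obtain ⟨i2, hi2, hik⟩ := List.mem_iff_getElem.1 (mem_giList x k)
  have hi2' : i2 < J := by rwa [length_giList] at hi2
  have him : m ≤ i2 := by
    by_contra h
    push_neg at h
    refine hk ?_
    rw [topM_eq, List.mem_toFinset, List.mem_iff_getElem]
    exact ⟨i2, by rw [List.length_take, length_giList]; omega,
      by rw [List.getElem_take]; exact hik⟩
  rw [← hij, ← hik]
  exact giList_getElem_le x (show i1 ≤ i2 by omega) hi2'

lemma exists_mem_not_mem {α : Type*} [DecidableEq α] {S T : Finset α} (h : S.card ≤ T.card)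
    {j : α} (hjS : j ∈ S) (hjT : j ∉ T) : ∃ k ∈ T, k ∉ S := by
  by_contra h'
  push_neg at h'
  have hsub : T ⊆ S := fun k hk => h' k hk
  have : T = S := Finset.eq_of_subset_of_card_le hsub h
  exact hjT (this ▸ hjS)

end GIAux

namespace GIAux

variable {J : ℕ}

lemma fdr_witness {l u : ℕ} (x : Fin J → ℝ) {a b c d : ℝ} (ha : 0 < a) (hb : 0 < b)
    (hlu : l < u) (huJ : u ≤ J) {A : Finset (Fin J)} (hAl : l ≤ A.card) (hAu : A.card ≤ u)
    (hcond : giCond x l u a b c d) {j0 : Fin J}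
    (hj0D : j0 ∈ topM x (max l (min u (pcount x)))) (hj0A : j0 ∉ A) :
    (∃ j, j ∉ A ∧ b ≤ x j) ∨ (∃ j, j ∉ A ∧ ∃ i ∈ A, c ≤ x j - x i) := by
  set p := pcount x with hp
  have hlJ : l < J := lt_of_lt_of_le hlu huJ
  rcases hcond with ⟨hla, hgap⟩ | ⟨hpl, hpu, hnot⟩ | ⟨hbu, hgap⟩
  · -- τ₁ case
    have hpl : p ≤ l := by
      have hsub : (Finset.univ.filter fun j => 0 < x j) ⊆ topM x l := by
        intro j hj
        by_contra hjt
        have h1 := le_orderStat_of_not_mem_topM x hlJ hjt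
        have h2 := (Finset.mem_filter.1 hj).2
        linarith
      have h5 : pcount x ≤ (topM x l).card := Finset.card_le_card hsub
      rw [card_topM] at h5
      omega
    have hp' : max l (min u p) = l := by omega
    rw [hp'] at hj0D
    have hl1 : 1 ≤ l := by
      rcases Nat.eq_zero_or_pos l with h0 | h0
      · exfalso
        have hcard : (topM x l).card = 0 := by rw [card_topM]; omega
        rw [Finset.card_eq_zero] at hcard
        rw [hcard] at hj0D
        exact Finset.notMem_empty _ hj0D
      · exact h0
    have hgap' : c ≤ orderStat x l - orderStat x (l + 1) := hgap.resolve_left (by omega)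
    obtain ⟨i0, hi0A, hi0D⟩ := exists_mem_not_mem
      (show (topM x l).card ≤ A.card by rw [card_topM]; omega) hj0D hj0A
    refine Or.inr ⟨j0, hj0A, i0, hi0A, ?_⟩
    have h1 : orderStat x l ≤ x j0 := orderStat_le_of_mem_topM x hl1 hlJ.le hj0D
    have h2 : x i0 ≤ orderStat x (l + 1) := le_orderStat_of_not_mem_topM x hlJ hi0D
    linarith
  · -- τ₂ case
    have hp' : max l (min u p) = p := by omega
    rw [hp'] at hj0D
    refine Or.inl ⟨j0, hj0A, ?_⟩
    have hDcard : (topM x p).card = p := by rw [card_topM]; omega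
    by_contra hbj
    push_neg at hbj
    have hx0 : x j0 ≤ 0 := by
      by_contra h
      push_neg at h
      have h2 := hnot j0
      rw [Set.mem_Ioo] at h2
      push_neg at h2
      exact absurd (h2 (by linarith)) (not_le.2 hbj)
    have hj0p : j0 ∉ Finset.univ.filter fun j => 0 < x j := by
      simp only [Finset.mem_filter, Finset.mem_univ, true_and, not_lt]
      exact hx0
    obtain ⟨k, hk, hkD⟩ := exists_mem_not_mem
      (show (topM x p).card ≤ (Finset.univ.filter fun j => 0 < x j).card from le_of_eq hDcard)
      hj0D hj0p
    have h3 : x k ≤ x j0 := le_of_mem_topM_of_not_mem x hj0D hkD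
    have h4 : 0 < x k := (Finset.mem_filter.1 hk).2
    linarith
  · -- τ₃ case
    have hu1 : 1 ≤ u := by omega
    have hup : u ≤ p := by
      have hsub : topM x u ⊆ Finset.univ.filter fun j => 0 < x j := by
        intro j hj
        have h1 := orderStat_le_of_mem_topM x hu1 huJ hj
        exact Finset.mem_filter.2 ⟨Finset.mem_univ _, by linarith⟩
      have h5 : (topM x u).card ≤ pcount x := Finset.card_le_card hsub
      rw [card_topM] at h5
      omega
    have hp' : max l (min u p) = u := by omega
    rw [hp'] at hj0D
    exact Or.inl ⟨j0, hj0A, le_trans hbu (orderStat_le_of_mem_topM x hu1 huJ hj0D)⟩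

lemma fnr_witness {l u : ℕ} (x : Fin J → ℝ) {a b c d : ℝ} (ha : 0 < a) (hb : 0 < b)
    (hlu : l < u) (huJ : u ≤ J) {A : Finset (Fin J)} (hAl : l ≤ A.card) (hAu : A.card ≤ u)
    (hcond : giCond x l u a b c d) {i0 : Fin J}
    (hi0A : i0 ∈ A) (hi0D : i0 ∉ topM x (max l (min u (pcount x)))) :
    (∃ i ∈ A, x i ≤ -a) ∨ (∃ i ∈ A, ∃ j, j ∉ A ∧ d ≤ x j - x i) := by
  set p := pcount x with hp
  have hlJ : l < J := lt_of_lt_of_le hlu huJ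
  rcases hcond with ⟨hla, hgap⟩ | ⟨hpl, hpu, hnot⟩ | ⟨hbu, hgap⟩
  · -- τ₁ case
    have hpl : p ≤ l := by
      have hsub : (Finset.univ.filter fun j => 0 < x j) ⊆ topM x l := by
        intro j hj
        by_contra hjt
        have h1 := le_orderStat_of_not_mem_topM x hlJ hjt
        have h2 := (Finset.mem_filter.1 hj).2
        linarith
      have h5 : pcount x ≤ (topM x l).card := Finset.card_le_card hsub
      rw [card_topM] at h5
      omega
    have hp' : max l (min u p) = l := by omega
    rw [hp'] at hi0D
    have h2 : x i0 ≤ orderStat x (l + 1) := le_orderStat_of_not_mem_topM x hlJ hi0D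
    exact Or.inl ⟨i0, hi0A, by linarith⟩
  · -- τ₂ case
    have hp' : max l (min u p) = p := by omega
    rw [hp'] at hi0D
    have hDcard : (topM x p).card = p := by rw [card_topM]; omega
    refine Or.inl ⟨i0, hi0A, ?_⟩
    by_contra hai
    push_neg at hai
    have h2 := hnot i0
    rw [Set.mem_Ioo] at h2
    push_neg at h2
    have hbi : b ≤ x i0 := h2 hai
    have hi0p : i0 ∈ Finset.univ.filter fun j => 0 < x j :=
      Finset.mem_filter.2 ⟨Finset.mem_univ _, by linarith⟩
    obtain ⟨k, hk, hkp⟩ := exists_mem_not_mem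
      (show (Finset.univ.filter fun j => 0 < x j).card ≤ (topM x p).card from le_of_eq hDcard.symm)
      hi0p hi0D
    have h3 : x i0 ≤ x k := le_of_mem_topM_of_not_mem x hk hi0D
    have h4 : x k ≤ 0 := by
      simp only [Finset.mem_filter, Finset.mem_univ, true_and, not_lt] at hkp
      exact hkp
    linarith
  · -- τ₃ case
    have hu1 : 1 ≤ u := by omega
    have hup : u ≤ p := by
      have hsub : topM x u ⊆ Finset.univ.filter fun j => 0 < x j := by
        intro j hj
        have h1 := orderStat_le_of_mem_topM x hu1 huJ hj
        exact Finset.mem_filter.2 ⟨Finset.mem_univ _, by linarith⟩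
      have h5 : (topM x u).card ≤ pcount x := Finset.card_le_card hsub
      rw [card_topM] at h5
      omega
    have hp' : max l (min u p) = u := by omega
    rw [hp'] at hi0D
    have huJ' : u < J := by
      rcases Nat.lt_or_ge u J with h | h
      · exact h
      · exfalso
        have huJ'' : u = J := le_antisymm huJ h
        have : (topM x u).card = Fintype.card (Fin J) := by
          rw [card_topM, Fintype.card_fin]; omega
        have := Finset.eq_univ_of_card _ this
        rw [this] at hi0D
        exact hi0D (Finset.mem_univ _)
    have hgap' : d ≤ orderStat x u - orderStat x (u + 1) := hgap.resolve_left (by omega)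
    obtain ⟨j0, hj0D, hj0A⟩ := exists_mem_not_mem
      (show A.card ≤ (topM x u).card by rw [card_topM]; omega) hi0A hi0D
    have h1 : orderStat x u ≤ x j0 := orderStat_le_of_mem_topM x hu1 huJ hj0D
    have h2 : x i0 ≤ orderStat x (u + 1) := le_orderStat_of_not_mem_topM x huJ' hi0D
    exact Or.inr ⟨i0, hi0A, j0, hj0A, by linarith⟩

end GIAux

namespace GIAux
variable {E : Type*} [MeasurableSpace E] (P0 P1 : Measure (ℕ → E))
  [IsProbabilityMeasure P0] [IsProbabilityMeasure P1]
def pin (E : Type*) (n : ℕ) : (ℕ → E) → (Fin n → E) := fun y (i : Fin n) => y i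
lemma measurable_pin (n : ℕ) : Measurable (pin E n) :=
  measurable_pi_lambda _ fun i => measurable_pi_apply _
noncomputable def rnD (n : ℕ) : (Fin n → E) → ENNReal :=
  (P1.map (pin E n)).rnDeriv (P0.map (pin E n))
lemma measurable_rnD (n : ℕ) : Measurable (rnD P0 P1 n) :=
  Measure.measurable_rnDeriv _ _
lemma llr_eq (n : ℕ) (x : ℕ → E) :
    llr P0 P1 n x = Real.log ((rnD P0 P1 n (pin E n x)).toReal) := rfl
lemma measurable_llr (n : ℕ) : Measurable (llr P0 P1 n) :=
  Real.measurable_log.comp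
    (((measurable_rnD P0 P1 n).comp (measurable_pin n)).ennreal_toReal)
lemma rep1 {n' : ℕ} (habs : P1.map (pin E n') ≪ P0.map (pin E n'))
    (B : Set (ℕ → E)) (hB : MeasurableSet B) (hBpre : ∃ C, MeasurableSet C ∧ B = (pin E n') ⁻¹' C) :
    ∫⁻ x in B, rnD P0 P1 n' (pin E n' x) ∂P0 = P1 B := by
  obtain ⟨C, hC, rfl⟩ := hBpre
  haveI : IsProbabilityMeasure (P0.map (pin E n')) :=
    Measure.isProbabilityMeasure_map (measurable_pin n').aemeasurable
  haveI : IsProbabilityMeasure (P1.map (pin E n')) :=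
    Measure.isProbabilityMeasure_map (measurable_pin n').aemeasurable
  rw [← setLIntegral_map hC (measurable_rnD P0 P1 n') (measurable_pin n')]
  unfold rnD
  rw [Measure.setLIntegral_rnDeriv habs, Measure.map_apply (measurable_pin n') hC]

/-- first-hitting sets for a threshold condition given by `q`. -/
def hitSet (q : ℝ → Prop) (n : ℕ) : Set (ℕ → E) :=
  {x | q (llr P0 P1 n x) ∧ ∀ m, m < n → ¬ q (llr P0 P1 m x)}

lemma measurableSet_hitSet (q : ℝ → Prop) (hq : MeasurableSet {s | q s}) (n : ℕ) :
    MeasurableSet (hitSet P0 P1 q n) := by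
  have h1 : ∀ m, MeasurableSet {x : ℕ → E | q (llr P0 P1 m x)} := fun m =>
    (measurable_llr P0 P1 m) hq
  have : hitSet P0 P1 q n =
      {x | q (llr P0 P1 n x)} ∩ ⋂ m ∈ Set.Iio n, {x | ¬ q (llr P0 P1 m x)} := by
    ext x
    simp [hitSet, Set.mem_Iio]
  rw [this]
  exact (h1 n).inter (MeasurableSet.biInter ((Set.finite_Iio n).countable)
    fun m _ => (h1 m).compl)

lemma hitSet_disjoint (q : ℝ → Prop) : Pairwise (Function.onFun Disjoint (hitSet P0 P1 q)) := by
  intro m n hmn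
  rw [Function.onFun, Set.disjoint_left]
  rcases Nat.lt_or_ge m n with h | h
  · intro x hxm hxn
    exact hxn.2 m h hxm.1
  · have h' : n < m := by omega
    intro x hxm hxn
    exact hxm.2 n h' hxn.1

lemma hitSet_cover (q : ℝ → Prop) : {x | ∃ n, q (llr P0 P1 n x)} ⊆ ⋃ n, hitSet P0 P1 q n := by
  classical
  intro x hx
  have hex : ∃ n, q (llr P0 P1 n x) := hx
  refine Set.mem_iUnion.2 ⟨Nat.find hex, Nat.find_spec hex, fun m hm => Nat.find_min hex hm⟩

/-- each hit set is a preimage of a measurable cylinder set. -/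
lemma hitSet_pre (q : ℝ → Prop) (hq : MeasurableSet {s | q s}) (n : ℕ) :
    ∃ C, MeasurableSet C ∧ hitSet P0 P1 q n = (pin E n) ⁻¹' C := by
  classical
  refine ⟨{z : Fin n → E | q (Real.log ((rnD P0 P1 n z).toReal))} ∩
    ⋂ m, ⋂ hm : m < n, {z : Fin n → E | ¬ q (Real.log ((rnD P0 P1 m
      (fun i : Fin m => z ⟨i.1, i.2.trans hm⟩)).toReal))}, ?_, ?_⟩
  · refine MeasurableSet.inter ?_ ?_
    · exact (Real.measurable_log.comp (measurable_rnD P0 P1 n).ennreal_toReal) hq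
    · refine MeasurableSet.iInter fun m => ?_
      refine MeasurableSet.iInter fun hm => ?_
      have hres : Measurable (fun z : Fin n → E => (fun i : Fin m => z ⟨i.1, i.2.trans hm⟩)) :=
        measurable_pi_lambda _ fun i => measurable_pi_apply _
      exact ((Real.measurable_log.comp
        (((measurable_rnD P0 P1 m).comp hres).ennreal_toReal)) hq).compl
  · ext x
    simp only [hitSet, Set.mem_setOf_eq, Set.mem_preimage, Set.mem_inter_iff, Set.mem_iInter]
    constructor
    · rintro ⟨h1, h2⟩
      exact ⟨h1, fun m hm => h2 m hm⟩
    · rintro ⟨h1, h2⟩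
      exact ⟨h1, fun m hm => h2 m hm⟩

lemma one_le_aux {t : ℝ} {f : ENNReal} (hf : ENNReal.ofReal (Real.exp t) ≤ f) :
    1 ≤ ENNReal.ofReal (Real.exp (-t)) * f := by
  calc (1 : ENNReal) = ENNReal.ofReal (Real.exp (-t)) * ENNReal.ofReal (Real.exp t) := by
        rw [← ENNReal.ofReal_mul (Real.exp_nonneg _)]
        · rw [← Real.exp_add, neg_add_cancel, Real.exp_zero, ENNReal.ofReal_one]
    _ ≤ _ := mul_le_mul_right hf _

lemma ofReal_exp_le {f : ENNReal} {t : ℝ} (ht : 0 < t) (h1 : t ≤ Real.log f.toReal) :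
    ENNReal.ofReal (Real.exp t) ≤ f := by
  rcases eq_or_ne f ⊤ with htop | htop
  · rw [htop]; exact le_top
  · have hs0 : 0 < f.toReal := by
      rcases lt_or_eq_of_le (ENNReal.toReal_nonneg : (0:ℝ) ≤ f.toReal) with h | h
      · exact h
      · exfalso; rw [← h, Real.log_zero] at h1; linarith
    have hexp : Real.exp t ≤ f.toReal := by
      have h2 := Real.exp_le_exp.2 h1
      rwa [Real.exp_log hs0] at h2
    have heq : f = ENNReal.ofReal f.toReal := (ENNReal.ofReal_toReal htop).symm
    rw [heq]
    exact ENNReal.ofReal_le_ofReal hexp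

lemma le_ofReal_exp {f : ENNReal} {t : ℝ} (ht : 0 < t) (h1 : Real.log f.toReal ≤ -t) :
    f ≤ ENNReal.ofReal (Real.exp (-t)) := by
  have hs0 : 0 < f.toReal := by
    rcases lt_or_eq_of_le (ENNReal.toReal_nonneg : (0:ℝ) ≤ f.toReal) with h | h
    · exact h
    · exfalso; rw [← h, Real.log_zero] at h1; linarith
  have htop : f ≠ ⊤ := by
    intro hcon
    rw [hcon, ENNReal.toReal_top] at hs0
    exact lt_irrefl _ hs0
  have hexp : f.toReal ≤ Real.exp (-t) := by
    have h2 := Real.exp_le_exp.2 h1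
    rwa [Real.exp_log hs0] at h2
  have heq : f = ENNReal.ofReal f.toReal := (ENNReal.ofReal_toReal htop).symm
  rw [heq]
  exact ENNReal.ofReal_le_ofReal hexp

lemma villeUpper (habs : ∀ n : ℕ, P1.map (pin E n) ≪ P0.map (pin E n))
    {t : ℝ} (ht : 0 < t) :
    P0 {x | ∃ n, t ≤ llr P0 P1 n x} ≤ ENNReal.ofReal (Real.exp (-t)) := by
  set q : ℝ → Prop := fun s => t ≤ s with hqdef
  have hq : MeasurableSet {s | q s} := measurableSet_le measurable_const measurable_id
  have hS := measurableSet_hitSet P0 P1 q hq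
  have key : ∀ n, P0 (hitSet P0 P1 q n) ≤
      ENNReal.ofReal (Real.exp (-t)) * P1 (hitSet P0 P1 q n) := by
    intro n
    have hpoint : ∀ x ∈ hitSet P0 P1 q n,
        (1 : ENNReal) ≤ ENNReal.ofReal (Real.exp (-t)) * rnD P0 P1 n (pin E n x) := by
      intro x hx
      exact one_le_aux (ofReal_exp_le ht hx.1)
    calc P0 (hitSet P0 P1 q n) = ∫⁻ _ in hitSet P0 P1 q n, 1 ∂P0 := by
          rw [setLIntegral_one]
      _ ≤ ∫⁻ x in hitSet P0 P1 q n,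
          ENNReal.ofReal (Real.exp (-t)) * rnD P0 P1 n (pin E n x) ∂P0 :=
          setLIntegral_mono (measurable_const.mul
            ((measurable_rnD P0 P1 n).comp (measurable_pin n))) hpoint
      _ = ENNReal.ofReal (Real.exp (-t)) *
          ∫⁻ x in hitSet P0 P1 q n, rnD P0 P1 n (pin E n x) ∂P0 :=
          lintegral_const_mul _ ((measurable_rnD P0 P1 n).comp (measurable_pin n))
      _ = ENNReal.ofReal (Real.exp (-t)) * P1 (hitSet P0 P1 q n) := by
          rw [rep1 P0 P1 (habs n) _ (hS n) (hitSet_pre P0 P1 q hq n)]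
  calc P0 {x | ∃ n, t ≤ llr P0 P1 n x} ≤ P0 (⋃ n, hitSet P0 P1 q n) :=
        measure_mono (hitSet_cover P0 P1 q)
    _ ≤ ∑' n, P0 (hitSet P0 P1 q n) := measure_iUnion_le _
    _ ≤ ∑' n, ENNReal.ofReal (Real.exp (-t)) * P1 (hitSet P0 P1 q n) :=
        ENNReal.tsum_le_tsum key
    _ = ENNReal.ofReal (Real.exp (-t)) * ∑' n, P1 (hitSet P0 P1 q n) :=
        ENNReal.tsum_mul_left
    _ = ENNReal.ofReal (Real.exp (-t)) * P1 (⋃ n, hitSet P0 P1 q n) := by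
        rw [measure_iUnion (hitSet_disjoint P0 P1 q) hS]
    _ ≤ ENNReal.ofReal (Real.exp (-t)) * 1 :=
        mul_le_mul_right prob_le_one _
    _ = ENNReal.ofReal (Real.exp (-t)) := mul_one _

lemma villeLower (habs : ∀ n : ℕ, P1.map (pin E n) ≪ P0.map (pin E n))
    {t : ℝ} (ht : 0 < t) :
    P1 {x | ∃ n, llr P0 P1 n x ≤ -t} ≤ ENNReal.ofReal (Real.exp (-t)) := by
  set q : ℝ → Prop := fun s => s ≤ -t with hqdef
  have hq : MeasurableSet {s | q s} := measurableSet_le measurable_id measurable_const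
  have hS := measurableSet_hitSet P0 P1 q hq
  have key : ∀ n, P1 (hitSet P0 P1 q n) ≤
      ENNReal.ofReal (Real.exp (-t)) * P0 (hitSet P0 P1 q n) := by
    intro n
    have hpoint : ∀ x ∈ hitSet P0 P1 q n,
        rnD P0 P1 n (pin E n x) ≤ ENNReal.ofReal (Real.exp (-t)) := by
      intro x hx
      exact le_ofReal_exp ht hx.1
    calc P1 (hitSet P0 P1 q n)
        = ∫⁻ x in hitSet P0 P1 q n, rnD P0 P1 n (pin E n x) ∂P0 :=
          (rep1 P0 P1 (habs n) _ (hS n) (hitSet_pre P0 P1 q hq n)).symm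
      _ ≤ ∫⁻ _ in hitSet P0 P1 q n, ENNReal.ofReal (Real.exp (-t)) ∂P0 :=
          setLIntegral_mono measurable_const hpoint
      _ = ENNReal.ofReal (Real.exp (-t)) * P0 (hitSet P0 P1 q n) := by
          rw [setLIntegral_const]
  calc P1 {x | ∃ n, llr P0 P1 n x ≤ -t} ≤ P1 (⋃ n, hitSet P0 P1 q n) :=
        measure_mono (hitSet_cover P0 P1 q)
    _ ≤ ∑' n, P1 (hitSet P0 P1 q n) := measure_iUnion_le _
    _ ≤ ∑' n, ENNReal.ofReal (Real.exp (-t)) * P0 (hitSet P0 P1 q n) :=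
        ENNReal.tsum_le_tsum key
    _ = ENNReal.ofReal (Real.exp (-t)) * ∑' n, P0 (hitSet P0 P1 q n) :=
        ENNReal.tsum_mul_left
    _ = ENNReal.ofReal (Real.exp (-t)) * P0 (⋃ n, hitSet P0 P1 q n) := by
        rw [measure_iUnion (hitSet_disjoint P0 P1 q) hS]
    _ ≤ ENNReal.ofReal (Real.exp (-t)) * 1 :=
        mul_le_mul_right prob_le_one _
    _ = ENNReal.ofReal (Real.exp (-t)) := mul_one _


/-- finite-dimensional pair change of measure -/
lemma pair_change {W1 W2 : Type*} [MeasurableSpace W1] [MeasurableSpace W2]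
    (μ0 μ1 : Measure W1) (ν0 ν1 : Measure W2)
    [IsProbabilityMeasure μ0] [IsProbabilityMeasure μ1]
    [IsProbabilityMeasure ν0] [IsProbabilityMeasure ν1]
    (hμ : μ1 ≪ μ0) (hν01 : ν0 ≪ ν1) (hν10 : ν1 ≪ ν0)
    {C : Set (W1 × W2)} (hC : MeasurableSet C) :
    ∫⁻ w in C, (μ1.rnDeriv μ0) w.1 * ((ν1.rnDeriv ν0) w.2)⁻¹ ∂(μ0.prod ν1) =
      (μ1.prod ν0) C := by
  have hmf : Measurable fun w : W1 × W2 => (μ1.rnDeriv μ0) w.1 * ((ν1.rnDeriv ν0) w.2)⁻¹ :=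
    ((Measure.measurable_rnDeriv _ _).comp measurable_fst).mul
      (((Measure.measurable_rnDeriv _ _).comp measurable_snd).inv)
  rw [← lintegral_indicator hC]
  rw [lintegral_prod _ ((hmf.indicator hC).aemeasurable)]
  have hinner : ∀ w1 : W1,
      ∫⁻ w2, C.indicator (fun w : W1 × W2 => (μ1.rnDeriv μ0) w.1 *
        ((ν1.rnDeriv ν0) w.2)⁻¹) (w1, w2) ∂ν1 =
      (μ1.rnDeriv μ0) w1 * ν0 (Prod.mk w1 ⁻¹' C) := by
    intro w1
    have h1 : (fun w2 => C.indicator (fun w : W1 × W2 => (μ1.rnDeriv μ0) w.1 *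
        ((ν1.rnDeriv ν0) w.2)⁻¹) (w1, w2)) =
        (Prod.mk w1 ⁻¹' C).indicator (fun w2 => (μ1.rnDeriv μ0) w1 *
        ((ν1.rnDeriv ν0) w2)⁻¹) := by
      funext w2
      by_cases hw : (w1, w2) ∈ C <;>
        simp [Set.indicator_apply, Set.mem_preimage, hw]
    rw [h1, lintegral_indicator (measurable_prodMk_left hC),
      lintegral_const_mul (f := fun w2 => ((ν1.rnDeriv ν0) w2)⁻¹) _ (Measure.measurable_rnDeriv _ _).inv]
    congr 1
    have h2 : (fun w2 => ((ν1.rnDeriv ν0) w2)⁻¹) =ᵐ[ν1] ν0.rnDeriv ν1 :=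
      Measure.inv_rnDeriv hν10
    have h3 : (fun w2 => ((ν1.rnDeriv ν0) w2)⁻¹) =ᵐ[ν1.restrict (Prod.mk w1 ⁻¹' C)]
        ν0.rnDeriv ν1 := ae_restrict_of_ae h2
    rw [lintegral_congr_ae h3]
    exact Measure.setLIntegral_rnDeriv hν01 _
  rw [lintegral_congr hinner]
  rw [MeasureTheory.lintegral_rnDeriv_mul hμ
    ((measurable_measure_prodMk_left hC).aemeasurable)]
  exact (Measure.prod_apply hC).symm


section Pair

variable {E1 E2 : Type*} [MeasurableSpace E1] [MeasurableSpace E2]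
  (A0 A1 : Measure (ℕ → E1)) (B0 B1 : Measure (ℕ → E2))
  [IsProbabilityMeasure A0] [IsProbabilityMeasure A1]
  [IsProbabilityMeasure B0] [IsProbabilityMeasure B1]

/-- restriction of both streams to the first `n` coordinates -/
def pin2 (E1 E2 : Type*) (n : ℕ) : (ℕ → E1) × (ℕ → E2) → (Fin n → E1) × (Fin n → E2) :=
  Prod.map (pin E1 n) (pin E2 n)

lemma measurable_pin2 (n : ℕ) : Measurable (pin2 E1 E2 n) :=
  (measurable_pin n).prodMap (measurable_pin n)

/-- the pair log-likelihood-ratio difference statistic -/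
noncomputable def llr2 (n : ℕ) (z : (ℕ → E1) × (ℕ → E2)) : ℝ :=
  llr A0 A1 n z.1 - llr B0 B1 n z.2

lemma measurable_llr2 (n : ℕ) : Measurable (llr2 A0 A1 B0 B1 n) :=
  ((measurable_llr A0 A1 n).comp measurable_fst).sub
    ((measurable_llr B0 B1 n).comp measurable_snd)

/-- first-hitting sets for the pair statistic -/
def hit2 (t : ℝ) (n : ℕ) : Set ((ℕ → E1) × (ℕ → E2)) :=
  {z | t ≤ llr2 A0 A1 B0 B1 n z ∧ ∀ m, m < n → ¬ t ≤ llr2 A0 A1 B0 B1 m z}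

lemma measurableSet_hit2 (t : ℝ) (n : ℕ) : MeasurableSet (hit2 A0 A1 B0 B1 t n) := by
  have h1 : ∀ m, MeasurableSet {z : (ℕ → E1) × (ℕ → E2) | t ≤ llr2 A0 A1 B0 B1 m z} :=
    fun m => measurableSet_le measurable_const (measurable_llr2 A0 A1 B0 B1 m)
  have : hit2 A0 A1 B0 B1 t n = {z | t ≤ llr2 A0 A1 B0 B1 n z} ∩
      ⋂ m, ⋂ _ : m < n, {z | ¬ t ≤ llr2 A0 A1 B0 B1 m z} := by
    ext z
    simp only [hit2, Set.mem_setOf_eq, Set.mem_inter_iff, Set.mem_iInter]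
  rw [this]
  exact (h1 n).inter (MeasurableSet.iInter fun m => MeasurableSet.iInter fun _ => (h1 m).compl)

lemma hit2_disjoint (t : ℝ) : Pairwise (Function.onFun Disjoint (hit2 A0 A1 B0 B1 t)) := by
  intro m n hmn
  rw [Function.onFun, Set.disjoint_left]
  rcases Nat.lt_or_ge m n with h | h
  · intro z hzm hzn
    exact hzn.2 m h hzm.1
  · have h' : n < m := by omega
    intro z hzm hzn
    exact hzm.2 n h' hzn.1

lemma hit2_cover (t : ℝ) : {z : (ℕ → E1) × (ℕ → E2) | ∃ n, t ≤ llr2 A0 A1 B0 B1 n z} ⊆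
    ⋃ n, hit2 A0 A1 B0 B1 t n := by
  classical
  intro z hz
  have hex : ∃ n, t ≤ llr2 A0 A1 B0 B1 n z := hz
  exact Set.mem_iUnion.2 ⟨Nat.find hex, Nat.find_spec hex, fun m hm => Nat.find_min hex hm⟩

lemma hit2_pre (t : ℝ) (n : ℕ) :
    ∃ C, MeasurableSet C ∧ hit2 A0 A1 B0 B1 t n = (pin2 E1 E2 n) ⁻¹' C := by
  classical
  refine ⟨{w : (Fin n → E1) × (Fin n → E2) |
      t ≤ Real.log ((rnD A0 A1 n w.1).toReal) - Real.log ((rnD B0 B1 n w.2).toReal)} ∩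
      ⋂ m, ⋂ hm : m < n, {w : (Fin n → E1) × (Fin n → E2) |
        ¬ t ≤ Real.log ((rnD A0 A1 m
          (fun i : Fin m => w.1 ⟨i.1, i.2.trans hm⟩)).toReal) -
        Real.log ((rnD B0 B1 m (fun i : Fin m => w.2 ⟨i.1, i.2.trans hm⟩)).toReal)},
    ?_, ?_⟩
  · have hf : ∀ (m : ℕ) (hm : m ≤ n), Measurable (fun w : (Fin n → E1) × (Fin n → E2) =>
        Real.log ((rnD A0 A1 m
          (fun i : Fin m => w.1 ⟨i.1, lt_of_lt_of_le i.2 hm⟩)).toReal) -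
        Real.log ((rnD B0 B1 m
          (fun i : Fin m => w.2 ⟨i.1, lt_of_lt_of_le i.2 hm⟩)).toReal)) := by
      intro m hm
      have hres1 : Measurable (fun w : (Fin n → E1) × (Fin n → E2) =>
          (fun i : Fin m => w.1 ⟨i.1, lt_of_lt_of_le i.2 hm⟩)) :=
        measurable_pi_lambda _ fun i => (measurable_pi_apply _).comp measurable_fst
      have hres2 : Measurable (fun w : (Fin n → E1) × (Fin n → E2) =>
          (fun i : Fin m => w.2 ⟨i.1, lt_of_lt_of_le i.2 hm⟩)) :=
        measurable_pi_lambda _ fun i => (measurable_pi_apply _).comp measurable_snd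
      exact (Real.measurable_log.comp
          (((measurable_rnD A0 A1 m).comp hres1).ennreal_toReal)).sub
        (Real.measurable_log.comp
          (((measurable_rnD B0 B1 m).comp hres2).ennreal_toReal))
    refine MeasurableSet.inter ?_ ?_
    · exact measurableSet_le measurable_const
        ((Real.measurable_log.comp
            (((measurable_rnD A0 A1 n).comp measurable_fst).ennreal_toReal)).sub
          (Real.measurable_log.comp
            (((measurable_rnD B0 B1 n).comp measurable_snd).ennreal_toReal)))
    · refine MeasurableSet.iInter fun m => ?_
      refine MeasurableSet.iInter fun hm => ?_
      exact (measurableSet_le measurable_const (hf m hm.le)).compl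
  · ext z
    simp only [hit2, llr2, Set.mem_setOf_eq, Set.mem_preimage, Set.mem_inter_iff,
      Set.mem_iInter]
    constructor
    · rintro ⟨h1, h2⟩
      exact ⟨h1, fun m hm => h2 m hm⟩
    · rintro ⟨h1, h2⟩
      exact ⟨h1, fun m hm => h2 m hm⟩


lemma rep2 {n : ℕ}
    (habsA1 : A1.map (pin E1 n) ≪ A0.map (pin E1 n))
    (habsB1 : B1.map (pin E2 n) ≪ B0.map (pin E2 n))
    (habsB2 : B0.map (pin E2 n) ≪ B1.map (pin E2 n))
    (S : Set ((ℕ → E1) × (ℕ → E2))) (hSpre : ∃ C, MeasurableSet C ∧ S = (pin2 E1 E2 n) ⁻¹' C) :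
    ∫⁻ z in S, rnD A0 A1 n (pin E1 n z.1) * (rnD B0 B1 n (pin E2 n z.2))⁻¹ ∂(A0.prod B1)
      = (A1.prod B0) S := by
  obtain ⟨C, hC, rfl⟩ := hSpre
  haveI : IsProbabilityMeasure (A0.map (pin E1 n)) :=
    Measure.isProbabilityMeasure_map (measurable_pin n).aemeasurable
  haveI : IsProbabilityMeasure (A1.map (pin E1 n)) :=
    Measure.isProbabilityMeasure_map (measurable_pin n).aemeasurable
  haveI : IsProbabilityMeasure (B0.map (pin E2 n)) :=
    Measure.isProbabilityMeasure_map (measurable_pin n).aemeasurable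
  haveI : IsProbabilityMeasure (B1.map (pin E2 n)) :=
    Measure.isProbabilityMeasure_map (measurable_pin n).aemeasurable
  have hmF : Measurable (fun w : (Fin n → E1) × (Fin n → E2) =>
      rnD A0 A1 n w.1 * (rnD B0 B1 n w.2)⁻¹) :=
    ((measurable_rnD A0 A1 n).comp measurable_fst).mul
      (((measurable_rnD B0 B1 n).comp measurable_snd).inv)
  have h1 : ∫⁻ z in (pin2 E1 E2 n) ⁻¹' C,
      rnD A0 A1 n (pin E1 n z.1) * (rnD B0 B1 n (pin E2 n z.2))⁻¹ ∂(A0.prod B1)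
      = ∫⁻ w in C, rnD A0 A1 n w.1 * (rnD B0 B1 n w.2)⁻¹ ∂((A0.prod B1).map (pin2 E1 E2 n)) := by
    rw [setLIntegral_map hC hmF (measurable_pin2 n)]
    rfl
  rw [h1]
  have h2 : (A0.prod B1).map (pin2 E1 E2 n) = (A0.map (pin E1 n)).prod (B1.map (pin E2 n)) :=
    (Measure.map_prod_map _ _ (measurable_pin n) (measurable_pin n)).symm
  rw [h2]
  unfold rnD
  have h3 := pair_change (A0.map (pin E1 n)) (A1.map (pin E1 n))
    (B0.map (pin E2 n)) (B1.map (pin E2 n)) habsA1 habsB2 habsB1 hC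
  rw [h3]
  rw [Measure.map_prod_map _ _ (measurable_pin n) (measurable_pin n),
    Measure.map_apply ((measurable_pin n).prodMap (measurable_pin n)) hC]
  rfl

lemma pair_point {F g : ENNReal} {t : ℝ} (hF : 0 < F) (hg0 : 0 < g) (hgt : g < ⊤)
    (h1 : t ≤ Real.log F.toReal - Real.log g.toReal) :
    1 ≤ ENNReal.ofReal (Real.exp (-t)) * (F * g⁻¹) := by
  have hsy : 0 < g.toReal := ENNReal.toReal_pos hg0.ne' hgt.ne
  have hgeq : g = ENNReal.ofReal g.toReal := (ENNReal.ofReal_toReal hgt.ne).symm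
  have claim : ENNReal.ofReal (Real.exp t) * g ≤ F := by
    rcases eq_or_ne F ⊤ with htop | htop
    · rw [htop]; exact le_top
    · have hsx : 0 < F.toReal := ENNReal.toReal_pos hF.ne' htop
      have hlog : t + Real.log g.toReal ≤ Real.log F.toReal := by linarith
      have hexp : Real.exp t * g.toReal ≤ F.toReal := by
        have h2 := Real.exp_le_exp.2 hlog
        rwa [Real.exp_add, Real.exp_log hsy, Real.exp_log hsx] at h2
      calc ENNReal.ofReal (Real.exp t) * g
          = ENNReal.ofReal (Real.exp t * g.toReal) := by
            conv_lhs => rw [hgeq]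
            rw [← ENNReal.ofReal_mul (Real.exp_nonneg _)]
        _ ≤ ENNReal.ofReal F.toReal := ENNReal.ofReal_le_ofReal hexp
        _ = F := ENNReal.ofReal_toReal htop
  calc (1 : ENNReal)
      = ENNReal.ofReal (Real.exp (-t)) * (ENNReal.ofReal (Real.exp t) * (g * g⁻¹)) := by
        rw [ENNReal.mul_inv_cancel hg0.ne' hgt.ne, mul_one,
          ← ENNReal.ofReal_mul (Real.exp_nonneg _), ← Real.exp_add, neg_add_cancel,
          Real.exp_zero, ENNReal.ofReal_one]
    _ = ENNReal.ofReal (Real.exp (-t)) * ((ENNReal.ofReal (Real.exp t) * g) * g⁻¹) := by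
        ring_nf
    _ ≤ ENNReal.ofReal (Real.exp (-t)) * (F * g⁻¹) :=
        mul_le_mul_right (mul_le_mul_left claim _) _


lemma measurableSet_posE {α : Type*} [MeasurableSpace α] {f : α → ENNReal}
    (hf : Measurable f) : MeasurableSet {x | 0 < f x} := by
  have : {x | 0 < f x} = (f ⁻¹' {0})ᶜ := by ext x; simp [pos_iff_ne_zero]
  rw [this]; exact (hf (measurableSet_singleton 0)).compl

lemma measurableSet_ltTopE {α : Type*} [MeasurableSpace α] {f : α → ENNReal}
    (hf : Measurable f) : MeasurableSet {x | f x < ⊤} := by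
  have : {x | f x < ⊤} = (f ⁻¹' {⊤})ᶜ := by ext x; simp [lt_top_iff_ne_top]
  rw [this]; exact (hf (measurableSet_singleton ⊤)).compl

lemma villePair
    (habsA1 : ∀ n, A1.map (pin E1 n) ≪ A0.map (pin E1 n))
    (habsA2 : ∀ n, A0.map (pin E1 n) ≪ A1.map (pin E1 n))
    (habsB1 : ∀ n, B1.map (pin E2 n) ≪ B0.map (pin E2 n))
    (habsB2 : ∀ n, B0.map (pin E2 n) ≪ B1.map (pin E2 n))
    {t : ℝ} (ht : 0 < t) :
    (A0.prod B1) {z : (ℕ → E1) × (ℕ → E2) | ∃ n, t ≤ llr A0 A1 n z.1 - llr B0 B1 n z.2}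
      ≤ ENNReal.ofReal (Real.exp (-t)) := by
  haveI : ∀ n, IsProbabilityMeasure (A0.map (pin E1 n)) :=
    fun n => Measure.isProbabilityMeasure_map (measurable_pin n).aemeasurable
  haveI : ∀ n, IsProbabilityMeasure (A1.map (pin E1 n)) :=
    fun n => Measure.isProbabilityMeasure_map (measurable_pin n).aemeasurable
  haveI : ∀ n, IsProbabilityMeasure (B0.map (pin E2 n)) :=
    fun n => Measure.isProbabilityMeasure_map (measurable_pin n).aemeasurable
  haveI : ∀ n, IsProbabilityMeasure (B1.map (pin E2 n)) :=
    fun n => Measure.isProbabilityMeasure_map (measurable_pin n).aemeasurable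
  -- good sets
  set Gx : Set (ℕ → E1) := {x | ∀ n, 0 < rnD A0 A1 n (pin E1 n x)} with hGxdef
  set Gy : Set (ℕ → E2) := {y | ∀ n, 0 < rnD B0 B1 n (pin E2 n y) ∧
    rnD B0 B1 n (pin E2 n y) < ⊤} with hGydef
  have hGxm : MeasurableSet Gx := by
    rw [hGxdef, Set.setOf_forall]
    exact MeasurableSet.iInter fun n =>
      measurableSet_posE ((measurable_rnD A0 A1 n).comp (measurable_pin n))
  have hGym : MeasurableSet Gy := by
    rw [hGydef]
    have : {y : ℕ → E2 | ∀ n, 0 < rnD B0 B1 n (pin E2 n y) ∧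
        rnD B0 B1 n (pin E2 n y) < ⊤} = ⋂ n, ({y : ℕ → E2 | 0 < rnD B0 B1 n (pin E2 n y)} ∩
        {y : ℕ → E2 | rnD B0 B1 n (pin E2 n y) < ⊤}) := by
      ext y
      simp only [Set.mem_setOf_eq, Set.mem_iInter, Set.mem_inter_iff]
    rw [this]
    exact MeasurableSet.iInter fun n =>
      (measurableSet_posE ((measurable_rnD B0 B1 n).comp (measurable_pin n))).inter
        (measurableSet_ltTopE ((measurable_rnD B0 B1 n).comp (measurable_pin n)))
  have hGx0 : A0 Gxᶜ = 0 := by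
    have hae : ∀ᵐ x ∂A0, ∀ n, 0 < rnD A0 A1 n (pin E1 n x) := by
      rw [ae_all_iff]
      intro n
      have h1 : ∀ᵐ w ∂(A1.map (pin E1 n)), 0 < rnD A0 A1 n w :=
        Measure.rnDeriv_pos (habsA1 n)
      have h2 : ∀ᵐ w ∂(A0.map (pin E1 n)), 0 < rnD A0 A1 n w :=
        (habsA2 n).ae_le h1
      exact ae_of_ae_map (measurable_pin n).aemeasurable h2
    rw [hGxdef, Set.compl_setOf]
    exact hae
  have hGy0 : B1 Gyᶜ = 0 := by
    have hae : ∀ᵐ y ∂B1, ∀ n, 0 < rnD B0 B1 n (pin E2 n y) ∧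
        rnD B0 B1 n (pin E2 n y) < ⊤ := by
      rw [ae_all_iff]
      intro n
      have h1 : ∀ᵐ w ∂(B1.map (pin E2 n)), 0 < rnD B0 B1 n w :=
        Measure.rnDeriv_pos (habsB1 n)
      have h2 : ∀ᵐ w ∂(B0.map (pin E2 n)), rnD B0 B1 n w < ⊤ :=
        Measure.rnDeriv_lt_top _ _
      have h3 : ∀ᵐ w ∂(B1.map (pin E2 n)), rnD B0 B1 n w < ⊤ :=
        (habsB1 n).ae_le h2
      exact ae_of_ae_map (measurable_pin n).aemeasurable (h1.and h3)
    rw [hGydef, Set.compl_setOf]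
    exact hae
  set G : Set ((ℕ → E1) × (ℕ → E2)) := Gx ×ˢ Gy with hGdef
  have hGm : MeasurableSet G := hGxm.prod hGym
  have hGc0 : (A0.prod B1) Gᶜ = 0 := by
    have hsub : Gᶜ ⊆ (Gxᶜ ×ˢ (Set.univ : Set (ℕ → E2))) ∪
        ((Set.univ : Set (ℕ → E1)) ×ˢ Gyᶜ) := by
      intro z hz
      rw [hGdef, Set.mem_compl_iff, Set.mem_prod] at hz
      push_neg at hz
      by_cases h1 : z.1 ∈ Gx
      · exact Or.inr ⟨Set.mem_univ _, hz h1⟩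
      · exact Or.inl ⟨h1, Set.mem_univ _⟩
    refine le_antisymm ?_ (zero_le)
    calc (A0.prod B1) Gᶜ ≤ (A0.prod B1) ((Gxᶜ ×ˢ Set.univ) ∪ (Set.univ ×ˢ Gyᶜ)) :=
          measure_mono hsub
      _ ≤ (A0.prod B1) (Gxᶜ ×ˢ Set.univ) + (A0.prod B1) (Set.univ ×ˢ Gyᶜ) :=
          measure_union_le _ _
      _ = 0 := by
          rw [Measure.prod_prod, Measure.prod_prod, hGx0, hGy0]
          simp
  -- key per-n bound
  have key : ∀ n, (A0.prod B1) (hit2 A0 A1 B0 B1 t n ∩ G) ≤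
      ENNReal.ofReal (Real.exp (-t)) * (A1.prod B0) (hit2 A0 A1 B0 B1 t n) := by
    intro n
    have hmF : Measurable (fun z : (ℕ → E1) × (ℕ → E2) =>
        rnD A0 A1 n (pin E1 n z.1) * (rnD B0 B1 n (pin E2 n z.2))⁻¹) :=
      (((measurable_rnD A0 A1 n).comp ((measurable_pin n).comp measurable_fst)).mul
        (((measurable_rnD B0 B1 n).comp ((measurable_pin n).comp measurable_snd)).inv))
    have hpoint : ∀ z ∈ hit2 A0 A1 B0 B1 t n ∩ G, (1 : ENNReal) ≤
        ENNReal.ofReal (Real.exp (-t)) *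
          (rnD A0 A1 n (pin E1 n z.1) * (rnD B0 B1 n (pin E2 n z.2))⁻¹) := by
      rintro z ⟨hzh, hzG⟩
      rw [hGdef, Set.mem_prod] at hzG
      have hF : 0 < rnD A0 A1 n (pin E1 n z.1) := hzG.1 n
      have hg := hzG.2 n
      exact pair_point hF hg.1 hg.2 hzh.1
    calc (A0.prod B1) (hit2 A0 A1 B0 B1 t n ∩ G)
        = ∫⁻ _ in hit2 A0 A1 B0 B1 t n ∩ G, 1 ∂(A0.prod B1) := by rw [setLIntegral_one]
      _ ≤ ∫⁻ z in hit2 A0 A1 B0 B1 t n ∩ G, ENNReal.ofReal (Real.exp (-t)) *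
          (rnD A0 A1 n (pin E1 n z.1) * (rnD B0 B1 n (pin E2 n z.2))⁻¹) ∂(A0.prod B1) :=
          setLIntegral_mono (measurable_const.mul hmF) hpoint
      _ ≤ ∫⁻ z in hit2 A0 A1 B0 B1 t n, ENNReal.ofReal (Real.exp (-t)) *
          (rnD A0 A1 n (pin E1 n z.1) * (rnD B0 B1 n (pin E2 n z.2))⁻¹) ∂(A0.prod B1) :=
          lintegral_mono_set Set.inter_subset_left
      _ = ENNReal.ofReal (Real.exp (-t)) * ∫⁻ z in hit2 A0 A1 B0 B1 t n,
          rnD A0 A1 n (pin E1 n z.1) * (rnD B0 B1 n (pin E2 n z.2))⁻¹ ∂(A0.prod B1) :=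
          lintegral_const_mul _ hmF
      _ = ENNReal.ofReal (Real.exp (-t)) * (A1.prod B0) (hit2 A0 A1 B0 B1 t n) := by
          rw [rep2 A0 A1 B0 B1 (habsA1 n) (habsB1 n) (habsB2 n) _
            (hit2_pre A0 A1 B0 B1 t n)]
  -- assemble
  have hcover : {z : (ℕ → E1) × (ℕ → E2) | ∃ n, t ≤ llr A0 A1 n z.1 - llr B0 B1 n z.2} ⊆
      Gᶜ ∪ ⋃ n, (hit2 A0 A1 B0 B1 t n ∩ G) := by
    intro z hz
    by_cases hzG : z ∈ G
    · have := hit2_cover A0 A1 B0 B1 t hz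
      rcases Set.mem_iUnion.1 this with ⟨n, hn⟩
      exact Or.inr (Set.mem_iUnion.2 ⟨n, hn, hzG⟩)
    · exact Or.inl hzG
  calc (A0.prod B1) {z : (ℕ → E1) × (ℕ → E2) | ∃ n, t ≤ llr A0 A1 n z.1 - llr B0 B1 n z.2}
      ≤ (A0.prod B1) (Gᶜ ∪ ⋃ n, (hit2 A0 A1 B0 B1 t n ∩ G)) := measure_mono hcover
    _ ≤ (A0.prod B1) Gᶜ + (A0.prod B1) (⋃ n, (hit2 A0 A1 B0 B1 t n ∩ G)) :=
        measure_union_le _ _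
    _ = (A0.prod B1) (⋃ n, (hit2 A0 A1 B0 B1 t n ∩ G)) := by rw [hGc0, zero_add]
    _ ≤ ∑' n, (A0.prod B1) (hit2 A0 A1 B0 B1 t n ∩ G) := measure_iUnion_le _
    _ ≤ ∑' n, ENNReal.ofReal (Real.exp (-t)) * (A1.prod B0) (hit2 A0 A1 B0 B1 t n) :=
        ENNReal.tsum_le_tsum key
    _ = ENNReal.ofReal (Real.exp (-t)) * ∑' n, (A1.prod B0) (hit2 A0 A1 B0 B1 t n) :=
        ENNReal.tsum_mul_left
    _ = ENNReal.ofReal (Real.exp (-t)) * (A1.prod B0) (⋃ n, hit2 A0 A1 B0 B1 t n) := by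
        rw [measure_iUnion (hit2_disjoint A0 A1 B0 B1 t) (measurableSet_hit2 A0 A1 B0 B1 t)]
    _ ≤ ENNReal.ofReal (Real.exp (-t)) * 1 := mul_le_mul_right prob_le_one _
    _ = ENNReal.ofReal (Real.exp (-t)) := mul_one _

end Pair

end GIAux


namespace GIAux

lemma exp_neg_eq {al r : ℝ} (h0 : 0 < al) (h1 : al < 1) (hr : 0 < r) :
    Real.exp (-(|Real.log al| + Real.log r)) = al / r := by
  rw [abs_of_neg (Real.log_neg h0 h1)]
  rw [show -(-Real.log al + Real.log r) = Real.log al - Real.log r by ring]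
  rw [Real.exp_sub, Real.exp_log h0, Real.exp_log hr]

lemma fdr_numeric {al s l u J : ℝ} (hα : 0 < al) (hls : l ≤ s) (hsJ : s ≤ J)
    (hlJ : l < J) (hJ : 0 < J) (hs0 : 0 ≤ s) :
    (J - s) * (al / J) + ((J - s) * s) * (al / ((J - l) * J)) ≤ al := by
  have hJl : 0 < J - l := by linarith
  have h1 : (J - s) * (al / J) + ((J - s) * s) * (al / ((J - l) * J))
      = al * (((J - s) * (J - l) + (J - s) * s) / ((J - l) * J)) := by
    field_simp
  rw [h1]
  have h2 : ((J - s) * (J - l) + (J - s) * s) / ((J - l) * J) ≤ 1 := by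
    rw [div_le_one (by positivity)]
    nlinarith [mul_nonneg (sub_nonneg.2 hls) hs0]
  calc al * (((J - s) * (J - l) + (J - s) * s) / ((J - l) * J)) ≤ al * 1 :=
        mul_le_mul_of_nonneg_left h2 hα.le
    _ = al := mul_one _

lemma fnr_numeric {be s u J : ℝ} (hβ : 0 < be) (hsu : s ≤ u) (hsJ : s ≤ J)
    (hu : 0 < u) (hJ : 0 < J) (hs0 : 0 ≤ s) :
    s * (be / J) + (s * (J - s)) * (be / (u * J)) ≤ be := by
  have h1 : s * (be / J) + (s * (J - s)) * (be / (u * J))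
      = be * ((s * u + s * (J - s)) / (u * J)) := by
    field_simp
  rw [h1]
  have h2 : (s * u + s * (J - s)) / (u * J) ≤ 1 := by
    rw [div_le_one (by positivity)]
    nlinarith [mul_nonneg (sub_nonneg.2 hsu) (sub_nonneg.2 hsJ)]
  calc be * ((s * u + s * (J - s)) / (u * J)) ≤ be * 1 :=
        mul_le_mul_of_nonneg_left h2 hβ.le
    _ = be := mul_one _

end GIAux

/-- Admissibility of the gap-intersection rule for FDR/FNR control when the number of
signals is known to lie in `[ℓ, u]`: with thresholds `a = |log β| + log J`,
`b = |log α| + log J`, `c = |log α| + log((J − ℓ)J)`, `d = |log β| + log(uJ)`, under any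
signal set `A` with `ℓ ≤ |A| ≤ u` the rule terminates `P_A`-a.s. and satisfies
`FDR_A ≤ α` and `FNR_A ≤ β`, where `FDR_A = E_A[V/max(R,1)]`, `FNR_A = E_A[W/max(J−R,1)]`,
`V = |D \ A|`, `W = |A \ D|`, `R = |D| = p′`. -/
theorem stmt16 (J : ℕ) (hJ : 2 ≤ J) (E : Fin J → Type*) [∀ j, MeasurableSpace (E j)]
    (P0 P1 : ∀ j, Measure (ℕ → E j))
    [∀ j, IsProbabilityMeasure (P0 j)] [∀ j, IsProbabilityMeasure (P1 j)]
    (habs : ∀ (j : Fin J) (n : ℕ),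
      (P1 j).map (fun y (i : Fin n) => y i) ≪ (P0 j).map (fun y (i : Fin n) => y i) ∧
      (P0 j).map (fun y (i : Fin n) => y i) ≪ (P1 j).map (fun y (i : Fin n) => y i))
    (hnull : ∀ j, ∀ᵐ x ∂(P0 j), Tendsto (fun n => llr (P0 j) (P1 j) n x) atTop atBot)
    (halt : ∀ j, ∀ᵐ x ∂(P1 j), Tendsto (fun n => llr (P0 j) (P1 j) n x) atTop atTop)
    (l u : ℕ) (hlu : l < u) (huJ : u ≤ J)
    (α β : ℝ) (hα : α ∈ Set.Ioo (0 : ℝ) 1) (hβ : β ∈ Set.Ioo (0 : ℝ) 1)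
    (a b c d : ℝ)
    (ha : a = |Real.log β| + Real.log (J : ℝ))
    (hb : b = |Real.log α| + Real.log (J : ℝ))
    (hc : c = |Real.log α| + Real.log (((J - l) * J : ℕ) : ℝ))
    (hd : d = |Real.log β| + Real.log ((u * J : ℕ) : ℝ))
    (A : Finset (Fin J)) (hAl : l ≤ A.card) (hAu : A.card ≤ u)
    (PA : Measure (∀ j, ℕ → E j)) [IsProbabilityMeasure PA]
    (hind : iIndepFun (fun j ω => ω j) PA)
    (hlaw : ∀ j, PA.map (fun ω => ω j) = if j ∈ A then P1 j else P0 j) :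
    -- the gap-intersection rule terminates `P_A`-almost surely:
    (∀ᵐ ω ∂PA, ∃ n : ℕ, 1 ≤ n ∧
      giCond (fun j => llr (P0 j) (P1 j) n (ω j)) l u a b c d) ∧
    -- FDR_A ≤ α:
    (∫ ω, ((giD (fun j n => llr (P0 j) (P1 j) n (ω j)) l u a b c d \ A).card : ℝ)
        / ((max (giR (fun j n => llr (P0 j) (P1 j) n (ω j)) l u a b c d) 1 : ℕ) : ℝ) ∂PA)
      ≤ α ∧
    -- FNR_A ≤ β:
    (∫ ω, ((A \ giD (fun j n => llr (P0 j) (P1 j) n (ω j)) l u a b c d).card : ℝ)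
        / ((max (J - giR (fun j n => llr (P0 j) (P1 j) n (ω j)) l u a b c d) 1 : ℕ) : ℝ)
        ∂PA) ≤ β  := by
  classical
  have hπ : ∀ j : Fin J, Measurable fun ω : (∀ j, ℕ → E j) => ω j :=
    fun j => measurable_pi_apply j
  have hJR : (1:ℝ) < (J:ℝ) := by exact_mod_cast hJ
  have hJ0R : (0:ℝ) < (J:ℝ) := by linarith
  have hlogJ : 0 < Real.log (J:ℝ) := Real.log_pos hJR
  have habsα : 0 ≤ |Real.log α| := abs_nonneg _
  have habsβ : 0 ≤ |Real.log β| := abs_nonneg _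
  have ha' : 0 < a := by rw [ha]; linarith
  have hb' : 0 < b := by rw [hb]; linarith
  have hc' : 0 < c := by
    rw [hc]
    have h1 : (1:ℝ) < (((J - l) * J : ℕ) : ℝ) := by
      have h2 : 1 * J ≤ (J - l) * J := Nat.mul_le_mul (by omega) (le_refl J)
      exact_mod_cast (by omega : 1 < (J - l) * J)
    have := Real.log_pos h1
    linarith
  have hd' : 0 < d := by
    rw [hd]
    have h1 : (1:ℝ) < ((u * J : ℕ) : ℝ) := by
      have h2 : 1 * J ≤ u * J := Nat.mul_le_mul (by omega) (le_refl J)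
      exact_mod_cast (by omega : 1 < u * J)
    have := Real.log_pos h1
    linarith
  -- almost-sure limits under `PA`
  have htend : ∀ᵐ ω ∂PA, ∀ j : Fin J,
      (j ∈ A → Tendsto (fun n => llr (P0 j) (P1 j) n (ω j)) atTop atTop) ∧
      (j ∉ A → Tendsto (fun n => llr (P0 j) (P1 j) n (ω j)) atTop atBot) := by
    rw [ae_all_iff]
    intro j
    by_cases hj : j ∈ A
    · have h1 : ∀ᵐ x ∂(PA.map fun ω => ω j),
          Tendsto (fun n => llr (P0 j) (P1 j) n x) atTop atTop := by
        rw [hlaw j, if_pos hj]; exact halt j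
      exact (ae_of_ae_map (hπ j).aemeasurable h1).mono
        fun ω hω => ⟨fun _ => hω, fun h => absurd hj h⟩
    · have h1 : ∀ᵐ x ∂(PA.map fun ω => ω j),
          Tendsto (fun n => llr (P0 j) (P1 j) n x) atTop atBot := by
        rw [hlaw j, if_neg hj]; exact hnull j
      exact (ae_of_ae_map (hπ j).aemeasurable h1).mono
        fun ω hω => ⟨fun h => absurd h hj, fun _ => hω⟩
  -- a.s. termination
  have hterm : ∀ᵐ ω ∂PA, ∃ n : ℕ, 1 ≤ n ∧
      giCond (fun j => llr (P0 j) (P1 j) n (ω j)) l u a b c d := by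
    refine htend.mono fun ω hω => ?_
    have hev : ∀ᶠ n in atTop, ∀ j : Fin J,
        (j ∈ A → b ≤ llr (P0 j) (P1 j) n (ω j)) ∧
        (j ∉ A → llr (P0 j) (P1 j) n (ω j) ≤ -a) := by
      rw [eventually_all]
      intro j
      by_cases hj : j ∈ A
      · exact (((hω j).1 hj).eventually_ge_atTop b).mono
          fun n hn => ⟨fun _ => hn, fun h => absurd hj h⟩
      · exact (((hω j).2 hj).eventually_le_atBot (-a)).mono
          fun n hn => ⟨fun h => absurd h hj, fun _ => hn⟩
    obtain ⟨N, hN⟩ := eventually_atTop.1 hev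
    refine ⟨max N 1, le_max_right _ _, ?_⟩
    have hn := hN (max N 1) (le_max_left _ _)
    have hfil : (Finset.univ.filter fun j =>
        0 < llr (P0 j) (P1 j) (max N 1) (ω j)) = A := by
      ext j
      simp only [Finset.mem_filter, Finset.mem_univ, true_and]
      constructor
      · intro hpos
        by_contra hj
        have := (hn j).2 hj
        linarith
      · intro hj
        have := (hn j).1 hj
        linarith
    have hpc : pcount (fun j => llr (P0 j) (P1 j) (max N 1) (ω j)) = A.card := by
      unfold pcount
      rw [hfil]
    refine Or.inr (Or.inl ⟨?_, ?_, ?_⟩)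
    · rw [hpc]; exact hAl
    · rw [hpc]; exact hAu
    · intro j
      rw [Set.mem_Ioo]
      push_neg
      intro hgt
      by_cases hj : j ∈ A
      · exact (hn j).1 hj
      · have := (hn j).2 hj
        linarith
  refine ⟨hterm, ?_, ?_⟩
  · -- FDR control
    have hmSb : ∀ j : Fin J, MeasurableSet {x : ℕ → E j | ∃ n, b ≤ llr (P0 j) (P1 j) n x} := by
      intro j
      rw [Set.setOf_exists]
      exact MeasurableSet.iUnion fun n =>
        measurableSet_le measurable_const (GIAux.measurable_llr (P0 j) (P1 j) n)
    have hmSc : ∀ j i : Fin J, MeasurableSet {z : (ℕ → E j) × (ℕ → E i) |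
        ∃ n, c ≤ llr (P0 j) (P1 j) n z.1 - llr (P0 i) (P1 i) n z.2} := by
      intro j i
      rw [Set.setOf_exists]
      exact MeasurableSet.iUnion fun n => measurableSet_le measurable_const
        (((GIAux.measurable_llr (P0 j) (P1 j) n).comp measurable_fst).sub
          ((GIAux.measurable_llr (P0 i) (P1 i) n).comp measurable_snd))
    set Ub : Set (∀ j, ℕ → E j) :=
      (⋃ j ∈ (Finset.univ \ A : Finset (Fin J)),
        (fun ω : ∀ j, ℕ → E j => ω j) ⁻¹' {x | ∃ n, b ≤ llr (P0 j) (P1 j) n x}) ∪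
      (⋃ j ∈ (Finset.univ \ A : Finset (Fin J)), ⋃ i ∈ A,
        (fun ω : ∀ j, ℕ → E j => (ω j, ω i)) ⁻¹'
          {z | ∃ n, c ≤ llr (P0 j) (P1 j) n z.1 - llr (P0 i) (P1 i) n z.2}) with hUbdef
    have hUbm : MeasurableSet Ub := by
      refine MeasurableSet.union ?_ ?_
      · exact MeasurableSet.iUnion fun j => MeasurableSet.iUnion fun _ => (hπ j) (hmSb j)
      · exact MeasurableSet.iUnion fun j => MeasurableSet.iUnion fun _ =>
          MeasurableSet.iUnion fun i => MeasurableSet.iUnion fun _ =>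
          ((hπ j).prodMk (hπ i)) (hmSc j i)
    have hle : ∀ᵐ ω ∂PA,
        ((giD (fun j n => llr (P0 j) (P1 j) n (ω j)) l u a b c d \ A).card : ℝ) /
          ((max (giR (fun j n => llr (P0 j) (P1 j) n (ω j)) l u a b c d) 1 : ℕ) : ℝ)
          ≤ Ub.indicator (fun _ => (1:ℝ)) ω := by
      refine hterm.mono fun ω hω => ?_
      set lam : Fin J → ℕ → ℝ := fun j n => llr (P0 j) (P1 j) n (ω j) with hlam
      set T := giT lam l u a b c d with hT
      have hTmem : 1 ≤ T ∧ giCond (fun j => lam j T) l u a b c d := Nat.sInf_mem hω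
      have hden : (0:ℝ) < ((max (giR lam l u a b c d) 1 : ℕ) : ℝ) := by
        have h1 : 0 < max (giR lam l u a b c d) 1 := by omega
        exact_mod_cast h1
      rcases Nat.eq_zero_or_pos (giD lam l u a b c d \ A).card with h0 | hpos
      · rw [h0, Nat.cast_zero, zero_div]
        exact Set.indicator_nonneg (fun _ _ => zero_le_one) _
      · obtain ⟨j0, hj0⟩ := Finset.card_pos.1 hpos
        rw [Finset.mem_sdiff] at hj0
        have hj0D : j0 ∈ topM (fun j => lam j T)
            (max l (min u (pcount fun j => lam j T))) := hj0.1
        have hwit := GIAux.fdr_witness (x := fun j => lam j T) ha' hb' hlu huJ hAl hAu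
          hTmem.2 hj0D hj0.2
        have hmem : ω ∈ Ub := by
          rcases hwit with ⟨j, hjA, hbj⟩ | ⟨j, hjA, i, hiA, hci⟩
          · refine Or.inl (Set.mem_iUnion.2 ⟨j, Set.mem_iUnion.2
              ⟨Finset.mem_sdiff.2 ⟨Finset.mem_univ _, hjA⟩, ⟨T, hbj⟩⟩⟩)
          · refine Or.inr (Set.mem_iUnion.2 ⟨j, Set.mem_iUnion.2
              ⟨Finset.mem_sdiff.2 ⟨Finset.mem_univ _, hjA⟩,
              Set.mem_iUnion.2 ⟨i, Set.mem_iUnion.2 ⟨hiA, ⟨T, hci⟩⟩⟩⟩⟩)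
        rw [Set.indicator_of_mem hmem, div_le_one hden]
        have h1 : (giD lam l u a b c d \ A).card ≤ max (giR lam l u a b c d) 1 := by
          have h2 : (giD lam l u a b c d \ A).card ≤ (giD lam l u a b c d).card :=
            Finset.card_le_card Finset.sdiff_subset
          have h3 : (giD lam l u a b c d).card = min (giR lam l u a b c d) J :=
            GIAux.card_topM _ _
          omega
        exact_mod_cast h1
    have hint : Integrable (Ub.indicator fun _ => (1:ℝ)) PA :=
      (integrable_const 1).indicator hUbm
    have hnn : 0 ≤ᵐ[PA] fun ω =>
        ((giD (fun j n => llr (P0 j) (P1 j) n (ω j)) l u a b c d \ A).card : ℝ) /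
          ((max (giR (fun j n => llr (P0 j) (P1 j) n (ω j)) l u a b c d) 1 : ℕ) : ℝ) :=
      Filter.Eventually.of_forall fun ω => div_nonneg (Nat.cast_nonneg _) (Nat.cast_nonneg _)
    have hmono := integral_mono_of_nonneg hnn hint hle
    rw [integral_indicator_const (1:ℝ) hUbm, smul_eq_mul, mul_one] at hmono
    refine le_trans hmono ?_
    -- now bound (PA Ub).toReal
    have hEb : ∀ j ∈ (Finset.univ \ A : Finset (Fin J)),
        PA ((fun ω : ∀ j, ℕ → E j => ω j) ⁻¹' {x | ∃ n, b ≤ llr (P0 j) (P1 j) n x})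
          ≤ ENNReal.ofReal (α / (J:ℝ)) := by
      intro j hj
      have hjA : j ∉ A := (Finset.mem_sdiff.1 hj).2
      rw [← Measure.map_apply (hπ j) (hmSb j), hlaw j, if_neg hjA]
      refine le_trans (GIAux.villeUpper (P0 j) (P1 j) (fun n => (habs j n).1) hb')
        (le_of_eq ?_)
      congr 1
      rw [hb]
      exact GIAux.exp_neg_eq hα.1 hα.2 hJ0R
    have hJl1 : (0:ℝ) < (((J - l) * J : ℕ) : ℝ) := by
      have h1 : 0 < (J - l) * J := by
        have : 1 ≤ J - l := by omega
        positivity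
      exact_mod_cast h1
    have hEc : ∀ j ∈ (Finset.univ \ A : Finset (Fin J)), ∀ i ∈ A,
        PA ((fun ω : ∀ j, ℕ → E j => (ω j, ω i)) ⁻¹'
          {z | ∃ n, c ≤ llr (P0 j) (P1 j) n z.1 - llr (P0 i) (P1 i) n z.2})
          ≤ ENNReal.ofReal (α / (((J - l) * J : ℕ) : ℝ)) := by
      intro j hj i hi
      have hjA : j ∉ A := (Finset.mem_sdiff.1 hj).2
      have hne : j ≠ i := fun h => hjA (h ▸ hi)
      have hmap : PA.map (fun ω : ∀ j, ℕ → E j => (ω j, ω i)) =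
          (PA.map fun ω => ω j).prod (PA.map fun ω => ω i) :=
        (indepFun_iff_map_prod_eq_prod_map_map (hπ j).aemeasurable (hπ i).aemeasurable).1
          (hind.indepFun hne)
      rw [← Measure.map_apply ((hπ j).prodMk (hπ i)) (hmSc j i), hmap,
        hlaw j, hlaw i, if_neg hjA, if_pos hi]
      refine le_trans (GIAux.villePair (P0 j) (P1 j) (P0 i) (P1 i)
        (fun n => (habs j n).1) (fun n => (habs j n).2)
        (fun n => (habs i n).1) (fun n => (habs i n).2) hc') (le_of_eq ?_)
      congr 1
      rw [hc]
      exact GIAux.exp_neg_eq hα.1 hα.2 hJl1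
    have hcard : (Finset.univ \ A : Finset (Fin J)).card = J - A.card := by
      rw [Finset.card_sdiff_of_subset (Finset.subset_univ A), Finset.card_univ, Fintype.card_fin]
    have hUble : PA Ub ≤ ENNReal.ofReal α := by
      have hstep : PA Ub ≤
          ((J - A.card : ℕ) : ENNReal) * ENNReal.ofReal (α / (J:ℝ)) +
          ((J - A.card : ℕ) : ENNReal) * (((A.card : ℕ) : ENNReal) *
            ENNReal.ofReal (α / (((J - l) * J : ℕ) : ℝ))) := by
        calc PA Ub ≤ PA (⋃ j ∈ (Finset.univ \ A : Finset (Fin J)),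
              (fun ω : ∀ j, ℕ → E j => ω j) ⁻¹' {x | ∃ n, b ≤ llr (P0 j) (P1 j) n x}) +
            PA (⋃ j ∈ (Finset.univ \ A : Finset (Fin J)), ⋃ i ∈ A,
              (fun ω : ∀ j, ℕ → E j => (ω j, ω i)) ⁻¹'
                {z | ∃ n, c ≤ llr (P0 j) (P1 j) n z.1 - llr (P0 i) (P1 i) n z.2}) :=
              measure_union_le _ _
          _ ≤ (∑ j ∈ (Finset.univ \ A : Finset (Fin J)), ENNReal.ofReal (α / (J:ℝ))) +
              ∑ j ∈ (Finset.univ \ A : Finset (Fin J)), ∑ i ∈ A,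
                ENNReal.ofReal (α / (((J - l) * J : ℕ) : ℝ)) := by
              refine add_le_add ?_ ?_
              · refine le_trans (measure_biUnion_finset_le _ _) ?_
                exact Finset.sum_le_sum fun j hj => hEb j hj
              · refine le_trans (measure_biUnion_finset_le _ _) ?_
                refine Finset.sum_le_sum fun j hj => ?_
                refine le_trans (measure_biUnion_finset_le _ _) ?_
                exact Finset.sum_le_sum fun i hi => hEc j hj i hi
          _ = ((J - A.card : ℕ) : ENNReal) * ENNReal.ofReal (α / (J:ℝ)) +
              ((J - A.card : ℕ) : ENNReal) * (((A.card : ℕ) : ENNReal) *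
                ENNReal.ofReal (α / (((J - l) * J : ℕ) : ℝ))) := by
              rw [Finset.sum_const, Finset.sum_const, Finset.sum_const, hcard]
              simp [nsmul_eq_mul, mul_assoc]
      refine le_trans hstep ?_
      have hsJ : A.card ≤ J := le_trans hAu huJ
      have hc1 : ((J - A.card : ℕ) : ENNReal) = ENNReal.ofReal ((J:ℝ) - A.card) := by
        rw [← ENNReal.ofReal_natCast]
        congr 1
        push_cast [Nat.cast_sub hsJ]
        ring
      have hc2 : ((A.card : ℕ) : ENNReal) = ENNReal.ofReal ((A.card : ℝ)) := by
        rw [← ENNReal.ofReal_natCast]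
      have hsub : (0:ℝ) ≤ (J:ℝ) - A.card := by
        have : (A.card : ℝ) ≤ (J : ℝ) := by exact_mod_cast hsJ
        linarith
      rw [hc1, hc2, ← ENNReal.ofReal_mul hsub, ← ENNReal.ofReal_mul (Nat.cast_nonneg _),
        ← ENNReal.ofReal_mul hsub, ← ENNReal.ofReal_add
        (mul_nonneg hsub (div_nonneg hα.1.le hJ0R.le))
        (mul_nonneg hsub (mul_nonneg (Nat.cast_nonneg _) (div_nonneg hα.1.le hJl1.le)))]
      refine ENNReal.ofReal_le_ofReal ?_
      have hcastden : (((J - l) * J : ℕ) : ℝ) = ((J:ℝ) - l) * J := by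
        push_cast [Nat.cast_sub (by omega : l ≤ J)]
        ring
      rw [hcastden]
      have hls : (l:ℝ) ≤ (A.card : ℝ) := by exact_mod_cast hAl
      have hsJR : (A.card : ℝ) ≤ (J:ℝ) := by exact_mod_cast hsJ
      have hlJ : (l:ℝ) < (J:ℝ) := by exact_mod_cast (by omega : l < J)
      have := GIAux.fdr_numeric (s := (A.card : ℝ)) (l := (l:ℝ)) (u := (u:ℝ)) (J := (J:ℝ))
        hα.1 hls hsJR hlJ hJ0R (Nat.cast_nonneg _)
      linarith [this]
    exact ENNReal.toReal_le_of_le_ofReal hα.1.le hUble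
  · -- FNR control
    have hmSa : ∀ i : Fin J, MeasurableSet {x : ℕ → E i | ∃ n, llr (P0 i) (P1 i) n x ≤ -a} := by
      intro i
      rw [Set.setOf_exists]
      exact MeasurableSet.iUnion fun n =>
        measurableSet_le (GIAux.measurable_llr (P0 i) (P1 i) n) measurable_const
    have hmSd : ∀ j i : Fin J, MeasurableSet {z : (ℕ → E j) × (ℕ → E i) |
        ∃ n, d ≤ llr (P0 j) (P1 j) n z.1 - llr (P0 i) (P1 i) n z.2} := by
      intro j i
      rw [Set.setOf_exists]
      exact MeasurableSet.iUnion fun n => measurableSet_le measurable_const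
        (((GIAux.measurable_llr (P0 j) (P1 j) n).comp measurable_fst).sub
          ((GIAux.measurable_llr (P0 i) (P1 i) n).comp measurable_snd))
    set Ud : Set (∀ j, ℕ → E j) :=
      (⋃ i ∈ A, (fun ω : ∀ j, ℕ → E j => ω i) ⁻¹' {x | ∃ n, llr (P0 i) (P1 i) n x ≤ -a}) ∪
      (⋃ i ∈ A, ⋃ j ∈ (Finset.univ \ A : Finset (Fin J)),
        (fun ω : ∀ j, ℕ → E j => (ω j, ω i)) ⁻¹'
          {z | ∃ n, d ≤ llr (P0 j) (P1 j) n z.1 - llr (P0 i) (P1 i) n z.2}) with hUddef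
    have hUdm : MeasurableSet Ud := by
      refine MeasurableSet.union ?_ ?_
      · exact MeasurableSet.iUnion fun i => MeasurableSet.iUnion fun _ => (hπ i) (hmSa i)
      · exact MeasurableSet.iUnion fun i => MeasurableSet.iUnion fun _ =>
          MeasurableSet.iUnion fun j => MeasurableSet.iUnion fun _ =>
          ((hπ j).prodMk (hπ i)) (hmSd j i)
    have hle : ∀ᵐ ω ∂PA,
        ((A \ giD (fun j n => llr (P0 j) (P1 j) n (ω j)) l u a b c d).card : ℝ) /
          ((max (J - giR (fun j n => llr (P0 j) (P1 j) n (ω j)) l u a b c d) 1 : ℕ) : ℝ)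
          ≤ Ud.indicator (fun _ => (1:ℝ)) ω := by
      refine hterm.mono fun ω hω => ?_
      set lam : Fin J → ℕ → ℝ := fun j n => llr (P0 j) (P1 j) n (ω j) with hlam
      set T := giT lam l u a b c d with hT
      have hTmem : 1 ≤ T ∧ giCond (fun j => lam j T) l u a b c d := Nat.sInf_mem hω
      have hden : (0:ℝ) < ((max (J - giR lam l u a b c d) 1 : ℕ) : ℝ) := by
        have h1 : 0 < max (J - giR lam l u a b c d) 1 := by omega
        exact_mod_cast h1
      rcases Nat.eq_zero_or_pos (A \ giD lam l u a b c d).card with h0 | hpos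
      · rw [h0, Nat.cast_zero, zero_div]
        exact Set.indicator_nonneg (fun _ _ => zero_le_one) _
      · obtain ⟨i0, hi0⟩ := Finset.card_pos.1 hpos
        rw [Finset.mem_sdiff] at hi0
        have hi0D : i0 ∉ topM (fun j => lam j T)
            (max l (min u (pcount fun j => lam j T))) := hi0.2
        have hwit := GIAux.fnr_witness (x := fun j => lam j T) ha' hb' hlu huJ hAl hAu
          hTmem.2 hi0.1 hi0D
        have hmem : ω ∈ Ud := by
          rcases hwit with ⟨i, hiA, hai⟩ | ⟨i, hiA, j, hjA, hdj⟩
          · refine Or.inl (Set.mem_iUnion.2 ⟨i, Set.mem_iUnion.2 ⟨hiA, ⟨T, hai⟩⟩⟩)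
          · refine Or.inr (Set.mem_iUnion.2 ⟨i, Set.mem_iUnion.2 ⟨hiA,
              Set.mem_iUnion.2 ⟨j, Set.mem_iUnion.2
              ⟨Finset.mem_sdiff.2 ⟨Finset.mem_univ _, hjA⟩, ⟨T, hdj⟩⟩⟩⟩⟩)
        rw [Set.indicator_of_mem hmem, div_le_one hden]
        have hR : giR lam l u a b c d ≤ J := by
          have h2 : min u (pcount fun j => lam j T) ≤ u := min_le_left _ _
          have h3 : giR lam l u a b c d = max l (min u (pcount fun j => lam j T)) := rfl
          omega
        have h1 : (A \ giD lam l u a b c d).card ≤ max (J - giR lam l u a b c d) 1 := by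
          have h2 : A \ giD lam l u a b c d ⊆ Finset.univ \ giD lam l u a b c d :=
            Finset.sdiff_subset_sdiff (Finset.subset_univ A) (Finset.Subset.refl _)
          have h3 := Finset.card_le_card h2
          rw [Finset.card_sdiff_of_subset (Finset.subset_univ _), Finset.card_univ,
            Fintype.card_fin] at h3
          have h4 : (giD lam l u a b c d).card = min (giR lam l u a b c d) J :=
            GIAux.card_topM _ _
          omega
        exact_mod_cast h1
    have hint : Integrable (Ud.indicator fun _ => (1:ℝ)) PA :=
      (integrable_const 1).indicator hUdm
    have hnn : 0 ≤ᵐ[PA] fun ω =>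
        ((A \ giD (fun j n => llr (P0 j) (P1 j) n (ω j)) l u a b c d).card : ℝ) /
          ((max (J - giR (fun j n => llr (P0 j) (P1 j) n (ω j)) l u a b c d) 1 : ℕ) : ℝ) :=
      Filter.Eventually.of_forall fun ω => div_nonneg (Nat.cast_nonneg _) (Nat.cast_nonneg _)
    have hmono := integral_mono_of_nonneg hnn hint hle
    rw [integral_indicator_const (1:ℝ) hUdm, smul_eq_mul, mul_one] at hmono
    refine le_trans hmono ?_
    have hEa : ∀ i ∈ A,
        PA ((fun ω : ∀ j, ℕ → E j => ω i) ⁻¹' {x | ∃ n, llr (P0 i) (P1 i) n x ≤ -a})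
          ≤ ENNReal.ofReal (β / (J:ℝ)) := by
      intro i hi
      rw [← Measure.map_apply (hπ i) (hmSa i), hlaw i, if_pos hi]
      refine le_trans (GIAux.villeLower (P0 i) (P1 i) (fun n => (habs i n).1) ha')
        (le_of_eq ?_)
      congr 1
      rw [ha]
      exact GIAux.exp_neg_eq hβ.1 hβ.2 hJ0R
    have huJ1 : (0:ℝ) < ((u * J : ℕ) : ℝ) := by
      have h1 : 0 < u * J := Nat.mul_pos (by omega) (by omega)
      exact_mod_cast h1
    have hEd : ∀ i ∈ A, ∀ j ∈ (Finset.univ \ A : Finset (Fin J)),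
        PA ((fun ω : ∀ j, ℕ → E j => (ω j, ω i)) ⁻¹'
          {z | ∃ n, d ≤ llr (P0 j) (P1 j) n z.1 - llr (P0 i) (P1 i) n z.2})
          ≤ ENNReal.ofReal (β / ((u * J : ℕ) : ℝ)) := by
      intro i hi j hj
      have hjA : j ∉ A := (Finset.mem_sdiff.1 hj).2
      have hne : j ≠ i := fun h => hjA (h ▸ hi)
      have hmap : PA.map (fun ω : ∀ j, ℕ → E j => (ω j, ω i)) =
          (PA.map fun ω => ω j).prod (PA.map fun ω => ω i) :=
        (indepFun_iff_map_prod_eq_prod_map_map (hπ j).aemeasurable (hπ i).aemeasurable).1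
          (hind.indepFun hne)
      rw [← Measure.map_apply ((hπ j).prodMk (hπ i)) (hmSd j i), hmap,
        hlaw j, hlaw i, if_neg hjA, if_pos hi]
      refine le_trans (GIAux.villePair (P0 j) (P1 j) (P0 i) (P1 i)
        (fun n => (habs j n).1) (fun n => (habs j n).2)
        (fun n => (habs i n).1) (fun n => (habs i n).2) hd') (le_of_eq ?_)
      congr 1
      rw [hd]
      exact GIAux.exp_neg_eq hβ.1 hβ.2 huJ1
    have hcard : (Finset.univ \ A : Finset (Fin J)).card = J - A.card := by
      rw [Finset.card_sdiff_of_subset (Finset.subset_univ A), Finset.card_univ, Fintype.card_fin]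
    have hUdle : PA Ud ≤ ENNReal.ofReal β := by
      have hstep : PA Ud ≤
          ((A.card : ℕ) : ENNReal) * ENNReal.ofReal (β / (J:ℝ)) +
          ((A.card : ℕ) : ENNReal) * (((J - A.card : ℕ) : ENNReal) *
            ENNReal.ofReal (β / ((u * J : ℕ) : ℝ))) := by
        calc PA Ud ≤ PA (⋃ i ∈ A,
              (fun ω : ∀ j, ℕ → E j => ω i) ⁻¹' {x | ∃ n, llr (P0 i) (P1 i) n x ≤ -a}) +
            PA (⋃ i ∈ A, ⋃ j ∈ (Finset.univ \ A : Finset (Fin J)),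
              (fun ω : ∀ j, ℕ → E j => (ω j, ω i)) ⁻¹'
                {z | ∃ n, d ≤ llr (P0 j) (P1 j) n z.1 - llr (P0 i) (P1 i) n z.2}) :=
              measure_union_le _ _
          _ ≤ (∑ i ∈ A, ENNReal.ofReal (β / (J:ℝ))) +
              ∑ i ∈ A, ∑ j ∈ (Finset.univ \ A : Finset (Fin J)),
                ENNReal.ofReal (β / ((u * J : ℕ) : ℝ)) := by
              refine add_le_add ?_ ?_
              · refine le_trans (measure_biUnion_finset_le _ _) ?_
                exact Finset.sum_le_sum fun i hi => hEa i hi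
              · refine le_trans (measure_biUnion_finset_le _ _) ?_
                refine Finset.sum_le_sum fun i hi => ?_
                refine le_trans (measure_biUnion_finset_le _ _) ?_
                exact Finset.sum_le_sum fun j hj => hEd i hi j hj
          _ = ((A.card : ℕ) : ENNReal) * ENNReal.ofReal (β / (J:ℝ)) +
              ((A.card : ℕ) : ENNReal) * (((J - A.card : ℕ) : ENNReal) *
                ENNReal.ofReal (β / ((u * J : ℕ) : ℝ))) := by
              rw [Finset.sum_const, Finset.sum_const, Finset.sum_const, hcard]
              simp [nsmul_eq_mul, mul_assoc]
      refine le_trans hstep ?_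
      have hsJ : A.card ≤ J := le_trans hAu huJ
      have hc1 : ((J - A.card : ℕ) : ENNReal) = ENNReal.ofReal ((J:ℝ) - A.card) := by
        rw [← ENNReal.ofReal_natCast]
        congr 1
        push_cast [Nat.cast_sub hsJ]
        ring
      have hc2 : ((A.card : ℕ) : ENNReal) = ENNReal.ofReal ((A.card : ℝ)) := by
        rw [← ENNReal.ofReal_natCast]
      have hsub : (0:ℝ) ≤ (J:ℝ) - A.card := by
        have : (A.card : ℝ) ≤ (J : ℝ) := by exact_mod_cast hsJ
        linarith
      rw [hc1, hc2, ← ENNReal.ofReal_mul hsub, ← ENNReal.ofReal_mul (Nat.cast_nonneg _),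
        ← ENNReal.ofReal_mul (Nat.cast_nonneg _), ← ENNReal.ofReal_add
        (mul_nonneg (Nat.cast_nonneg _) (div_nonneg hβ.1.le hJ0R.le))
        (mul_nonneg (Nat.cast_nonneg _) (mul_nonneg hsub (div_nonneg hβ.1.le huJ1.le)))]
      refine ENNReal.ofReal_le_ofReal ?_
      have hcastden : ((u * J : ℕ) : ℝ) = (u:ℝ) * J := by push_cast; ring
      rw [hcastden]
      have hsu : (A.card : ℝ) ≤ (u:ℝ) := by exact_mod_cast hAu
      have hsJR : (A.card : ℝ) ≤ (J:ℝ) := by exact_mod_cast hsJ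
      have hu0 : (0:ℝ) < (u:ℝ) := by exact_mod_cast (by omega : 0 < u)
      have := GIAux.fnr_numeric (s := (A.card : ℝ)) (u := (u:ℝ)) (J := (J:ℝ))
        hβ.1 hsu hsJR hu0 hJ0R (Nat.cast_nonneg _)
      linarith [this]
    exact ENNReal.toReal_le_of_le_ofReal hβ.1.le hUdle
end

section
/- Fix integers 1 ≤ ℓ < u ≤ J−1 and α, β ∈ (0,1), and set the thresholds a = |log β| + log J, b = |log α| + log J, c = |log α| + log((J−ℓ)J), d = |log β| + log(uJ). Then for every signal set A ⊆ {1,…,J} with ℓ ≤ |A| ≤ u, the gap-intersection rule with these thresholds terminates P_A-almost surely and satisfies pFDR_A ≤ α and pFNR_A ≤ β (these conditional expectations being well defined since ℓ ≤ R ≤ u almost surely, so that R ≥ 1 and J − R ≥ 1 almost surely); that is, the gap-intersection rule with these thresholds is admissible for pFDR/pFNR control over the class of signal sets A with ℓ ≤ |A| ≤ u. -/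
open Filter MeasureTheory ProbabilityTheory

section Comb

variable {J : ℕ}

/-- The sorting relation used in `topM`. -/
abbrev rRel (x : Fin J → ℝ) (j k : Fin J) : Prop :=
  x k < x j ∨ (x j = x k ∧ j ≤ k)

instance rRel_total (x : Fin J → ℝ) : IsTotal (Fin J) (rRel x) := by
  constructor
  intro j k
  rcases lt_trichotomy (x j) (x k) with h | h | h
  · exact Or.inr (Or.inl h)
  · rcases le_total j k with hjk | hjk
    · exact Or.inl (Or.inr ⟨h, hjk⟩)
    · exact Or.inr (Or.inr ⟨h.symm, hjk⟩)
  · exact Or.inl (Or.inl h)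

instance rRel_trans (x : Fin J → ℝ) : IsTrans (Fin J) (rRel x) := by
  constructor
  rintro i j k (h1 | ⟨h1, h1'⟩) (h2 | ⟨h2, h2'⟩)
  · exact Or.inl (h2.trans h1)
  · exact Or.inl (h2 ▸ h1)
  · exact Or.inl (h1 ▸ h2)
  · exact Or.inr ⟨h1.trans h2, h1'.trans h2'⟩

/-- The list of indices sorted decreasingly by value (ties by index). -/
noncomputable def sortedIdx (x : Fin J → ℝ) : List (Fin J) :=
  @List.insertionSort (Fin J) (rRel x) (Classical.decRel _) (List.finRange J)

lemma topM_eq_sortedIdx (x : Fin J → ℝ) (m : ℕ) :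
    topM x m = ((sortedIdx x).take m).toFinset := rfl

lemma sortedIdx_perm (x : Fin J → ℝ) : List.Perm (sortedIdx x) (List.finRange J) :=
  @List.perm_insertionSort (Fin J) (rRel x) (Classical.decRel _) (List.finRange J)

lemma sortedIdx_length (x : Fin J → ℝ) : (sortedIdx x).length = J := by
  rw [(sortedIdx_perm x).length_eq, List.length_finRange]

lemma sortedIdx_nodup (x : Fin J → ℝ) : (sortedIdx x).Nodup :=
  (sortedIdx_perm x).nodup_iff.mpr (List.nodup_finRange J)

lemma sortedIdx_sorted (x : Fin J → ℝ) : (sortedIdx x).Pairwise (rRel x) :=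
  @List.pairwise_insertionSort (Fin J) (rRel x) (Classical.decRel _) _ _ _

lemma sortedIdx_anti (x : Fin J → ℝ) {i i' : ℕ} (h : i ≤ i') (h' : i' < J) :
    x ((sortedIdx x).get ⟨i', by rwa [sortedIdx_length]⟩) ≤
      x ((sortedIdx x).get ⟨i, by rw [sortedIdx_length]; omega⟩) := by
  rcases Nat.eq_or_lt_of_le h with rfl | hlt
  · exact le_rfl
  · have := (sortedIdx_sorted x).rel_get_of_lt
      (a := ⟨i, by rw [sortedIdx_length]; omega⟩)
      (b := ⟨i', by rwa [sortedIdx_length]⟩) (by simpa using hlt)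
    rcases this with h1 | ⟨h1, _⟩
    · exact h1.le
    · exact h1.ge

lemma orderStat_succ_get (x : Fin J → ℝ) {i : ℕ} (hiJ : i < J) :
    orderStat x (i + 1) = x ((sortedIdx x).get ⟨i, by rwa [sortedIdx_length]⟩) := by
  have hrev : (((sortedIdx x).map x).reverse).Pairwise (· ≤ ·) := by
    rw [List.pairwise_reverse, List.pairwise_map]
    refine (sortedIdx_sorted x).imp ?_
    rintro a b (h | ⟨h, _⟩)
    · exact h.le
    · exact h.ge
  have hperm : List.Perm ((Multiset.ofList (List.ofFn x)).sort (· ≤ ·))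
      (((sortedIdx x).map x).reverse) := by
    have h1 : List.Perm ((Multiset.ofList (List.ofFn x)).sort (· ≤ ·)) (List.ofFn x) :=
      Multiset.coe_eq_coe.mp (Multiset.sort_eq _ _)
    have h2 : List.Perm (((sortedIdx x).map x).reverse) (List.ofFn x) := by
      refine (List.reverse_perm _).trans ?_
      rw [List.ofFn_eq_map]
      exact (sortedIdx_perm x).map x
    exact h1.trans h2.symm
  have hsortlist : (Multiset.ofList (List.ofFn x)).sort (· ≤ ·) =
      ((sortedIdx x).map x).reverse :=
    List.Perm.eq_of_pairwise' (Multiset.pairwise_sort ..) hrev hperm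
  rw [orderStat, hsortlist]
  have hlen : ((sortedIdx x).map x).reverse.length = J := by
    simp [sortedIdx_length]
  rw [List.getD_eq_getElem _ _ (by omega)]
  rw [List.getElem_reverse]
  simp only [List.getElem_map, List.get_eq_getElem, List.length_map, sortedIdx_length]
  have hidx : J - 1 - (J - (i + 1)) = i := by omega
  simp only [hidx]

lemma orderStat_eq_get (x : Fin J → ℝ) {k : ℕ} (hk1 : 1 ≤ k) (hkJ : k ≤ J) :
    orderStat x k = x ((sortedIdx x).get ⟨k - 1, by rw [sortedIdx_length]; omega⟩) := by
  obtain ⟨i, rfl⟩ : ∃ i, k = i + 1 := ⟨k - 1, by omega⟩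
  simpa using orderStat_succ_get x (by omega : i < J)

lemma orderStat_anti (x : Fin J → ℝ) {k k' : ℕ} (hk1 : 1 ≤ k) (hkk : k ≤ k') (hk'J : k' ≤ J) :
    orderStat x k' ≤ orderStat x k := by
  rw [orderStat_eq_get x (le_trans hk1 hkk) hk'J, orderStat_eq_get x hk1 (le_trans hkk hk'J)]
  exact sortedIdx_anti x (by omega) (by omega)

lemma topM_card (x : Fin J → ℝ) {m : ℕ} (hm : m ≤ J) : (topM x m).card = m := by
  rw [topM_eq_sortedIdx, List.toFinset_card_of_nodup
    ((sortedIdx_nodup x).sublist (List.take_sublist _ _))]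
  rw [List.length_take, sortedIdx_length]
  omega

lemma mem_topM_of_idx (x : Fin J → ℝ) {m i : ℕ} (him : i < m) (hiJ : i < J) :
    (sortedIdx x).get ⟨i, by rwa [sortedIdx_length]⟩ ∈ topM x m := by
  rw [topM_eq_sortedIdx, List.mem_toFinset]
  have : ((sortedIdx x).take m)[i]'(by
      rw [List.length_take, sortedIdx_length]; omega) = (sortedIdx x)[i]'(by
      rwa [sortedIdx_length]) := List.getElem_take
  rw [List.get_eq_getElem, ← this]
  exact List.getElem_mem _

lemma exists_idx_of_mem (x : Fin J → ℝ) (j : Fin J) :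
    ∃ i : ℕ, ∃ h : i < J, (sortedIdx x).get ⟨i, by rwa [sortedIdx_length]⟩ = j := by
  have hj : j ∈ sortedIdx x := (sortedIdx_perm x).mem_iff.mpr (List.mem_finRange j)
  obtain ⟨i, hi, hij⟩ := List.mem_iff_getElem.mp hj
  exact ⟨i, by rwa [sortedIdx_length] at hi, hij⟩

lemma le_of_mem_topM (x : Fin J → ℝ) {m : ℕ} (hm1 : 1 ≤ m) (hmJ : m ≤ J) {j : Fin J}
    (hj : j ∈ topM x m) : orderStat x m ≤ x j := by
  obtain ⟨i, hiJ, hij⟩ := exists_idx_of_mem x j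
  rcases lt_or_ge i m with him | him
  · rw [orderStat_eq_get x hm1 hmJ, ← hij]
    exact sortedIdx_anti x (by omega) (by omega)
  · -- j has index ≥ m, but j ∈ topM x m: contradiction with nodup
    exfalso
    rw [topM_eq_sortedIdx, List.mem_toFinset] at hj
    obtain ⟨i', hi', hi'j⟩ := List.mem_iff_getElem.mp hj
    have hi'm : i' < m := by
      have h2 := hi'
      rw [List.length_take, sortedIdx_length] at h2
      omega
    have hi'J : i' < (sortedIdx x).length := by
      rw [sortedIdx_length]
      rw [List.length_take, sortedIdx_length] at hi'
      omega
    rw [List.getElem_take] at hi'j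
    have heq : (sortedIdx x)[i']'hi'J = (sortedIdx x)[i]'(by rwa [sortedIdx_length]) := by
      rw [hi'j, ← hij]; rfl
    have : i' = i := (List.Nodup.getElem_inj_iff (sortedIdx_nodup x)).mp heq
    omega

lemma le_of_not_mem_topM (x : Fin J → ℝ) {m : ℕ} (hmJ : m < J) {j : Fin J}
    (hj : j ∉ topM x m) : x j ≤ orderStat x (m + 1) := by
  obtain ⟨i, hiJ, hij⟩ := exists_idx_of_mem x j
  have him : m ≤ i := by
    by_contra h
    exact hj (hij ▸ mem_topM_of_idx x (by omega) hiJ)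
  rw [orderStat_succ_get x hmJ, ← hij]
  exact sortedIdx_anti x him hiJ

lemma pcount_le_card (x : Fin J → ℝ) : pcount x ≤ J := by
  rw [pcount]
  exact le_trans (Finset.card_filter_le _ _) (by simp)

lemma orderStat_pos_iff (x : Fin J → ℝ) {k : ℕ} (hk1 : 1 ≤ k) (hkJ : k ≤ J) :
    0 < orderStat x k ↔ k ≤ pcount x := by
  constructor
  · intro hpos
    have hsub : topM x k ⊆ Finset.univ.filter fun j => 0 < x j := by
      intro j hj
      rw [Finset.mem_filter]
      exact ⟨Finset.mem_univ j, lt_of_lt_of_le hpos (le_of_mem_topM x hk1 hkJ hj)⟩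
    calc k = (topM x k).card := (topM_card x hkJ).symm
    _ ≤ _ := Finset.card_le_card hsub
  · intro hple
    by_contra hnpos
    push_neg at hnpos
    have hsub : (Finset.univ.filter fun j => 0 < x j) ⊆ topM x (k - 1) := by
      intro j hj
      rw [Finset.mem_filter] at hj
      by_contra hnot
      rcases Nat.lt_or_ge (k-1) J with hkJ' | hkJ'
      · have := le_of_not_mem_topM x hkJ' hnot
        have : x j ≤ orderStat x k := by
          have hkk : k - 1 + 1 = k := by omega
          rwa [hkk] at this
        linarith [hj.2]
      · omega
    have : pcount x ≤ k - 1 := by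
      rw [pcount]
      exact le_trans (Finset.card_le_card hsub) (le_of_eq (topM_card x (by omega)))
    omega

lemma pos_mem_topM (x : Fin J → ℝ) {m : ℕ} (hm : pcount x ≤ m) (hmJ : m ≤ J) {j : Fin J}
    (hpos : 0 < x j) : j ∈ topM x m := by
  by_contra hnot
  rcases Nat.lt_or_ge m J with hmJ' | hmJ'
  · have hle := le_of_not_mem_topM x hmJ' hnot
    have : 0 < orderStat x (m+1) := lt_of_lt_of_le hpos hle
    have := (orderStat_pos_iff x (by omega) (by omega)).mp this
    omega
  · -- m = J: topM x J contains everything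
    have hm' : m = J := by omega
    apply hnot
    obtain ⟨i, hiJ, hij⟩ := exists_idx_of_mem x j
    exact hij ▸ mem_topM_of_idx x (by omega) hiJ

end Comb
section GIComb

variable {J : ℕ}

lemma pcount_le_of_orderStat_nonpos {x : Fin J → ℝ} {k : ℕ} (hk : k < J)
    (h : orderStat x (k + 1) ≤ 0) : pcount x ≤ k := by
  by_contra h'
  push_neg at h'
  have := (orderStat_pos_iff x (by omega) (by omega)).mpr (by omega : k + 1 ≤ pcount x)
  linarith

lemma giV_cases {l u : ℕ} {a b c d : ℝ} (x : Fin J → ℝ) (hl1 : 1 ≤ l) (hlu : l < u)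
    (huJ : u ≤ J - 1) (hJ : 2 ≤ J) (ha : 0 < a) (hb : 0 < b)
    (A : Finset (Fin J)) (hAl : l ≤ A.card)
    (hcond : giCond x l u a b c d)
    {j : Fin J} (hjD : j ∈ topM x (max l (min u (pcount x)))) (hjA : j ∉ A) :
    b ≤ x j ∨ ∃ k ∈ A, x k ≤ x j - c := by
  have huJ' : u < J := by omega
  have hlJ : l < J := by omega
  rcases hcond with ⟨h1a, h1b⟩ | ⟨h2a, h2b, h2c⟩ | ⟨h3a, h3b⟩
  · -- τ₁ case
    have hgap : c ≤ orderStat x l - orderStat x (l + 1) := by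
      rcases h1b with h | h
      · omega
      · exact h
    have hp : pcount x ≤ l := pcount_le_of_orderStat_nonpos hlJ (by linarith)
    have hR : max l (min u (pcount x)) = l := by omega
    rw [hR] at hjD
    right
    have hnsub : ¬ A ⊆ topM x l := by
      intro hsub
      have hsub' : A ⊆ (topM x l).erase j :=
        fun a ha => Finset.mem_erase.mpr ⟨fun hh => hjA (hh ▸ ha), hsub ha⟩
      have := Finset.card_le_card hsub'
      rw [Finset.card_erase_of_mem hjD, topM_card x hlJ.le] at this
      omega
    obtain ⟨k, hkA, hkD⟩ := Finset.not_subset.mp hnsub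
    refine ⟨k, hkA, ?_⟩
    have h1 := le_of_not_mem_topM x hlJ hkD
    have h2 := le_of_mem_topM x hl1 hlJ.le hjD
    linarith
  · -- τ₂ case
    have hR : max l (min u (pcount x)) = pcount x := by omega
    rw [hR] at hjD
    left
    have hpos : 0 < orderStat x (pcount x) :=
      (orderStat_pos_iff x (by omega) (pcount_le_card x)).mpr le_rfl
    have hxj : 0 < x j :=
      lt_of_lt_of_le hpos (le_of_mem_topM x (by omega) (pcount_le_card x) hjD)
    have := h2c j
    rw [Set.mem_Ioo] at this
    push_neg at this
    exact this (by linarith)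
  · -- τ₃ case
    have hpu : u ≤ pcount x := by
      refine (orderStat_pos_iff x (by omega) huJ'.le).mp (by linarith)
    have hR : max l (min u (pcount x)) = u := by omega
    rw [hR] at hjD
    left
    exact le_trans h3a (le_of_mem_topM x (by omega) huJ'.le hjD)

lemma giW_cases {l u : ℕ} {a b c d : ℝ} (x : Fin J → ℝ) (hl1 : 1 ≤ l) (hlu : l < u)
    (huJ : u ≤ J - 1) (hJ : 2 ≤ J) (ha : 0 < a) (hb : 0 < b)
    (A : Finset (Fin J)) (hAu : A.card ≤ u)
    (hcond : giCond x l u a b c d)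
    {k : Fin J} (hkA : k ∈ A) (hkD : k ∉ topM x (max l (min u (pcount x)))) :
    x k ≤ -a ∨ ∃ j, j ∉ A ∧ x k + d ≤ x j := by
  have huJ' : u < J := by omega
  have hlJ : l < J := by omega
  rcases hcond with ⟨h1a, h1b⟩ | ⟨h2a, h2b, h2c⟩ | ⟨h3a, h3b⟩
  · -- τ₁ case
    have hp : pcount x ≤ l := pcount_le_of_orderStat_nonpos hlJ (by linarith)
    have hR : max l (min u (pcount x)) = l := by omega
    rw [hR] at hkD
    left
    have := le_of_not_mem_topM x hlJ hkD
    linarith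
  · -- τ₂ case
    have hR : max l (min u (pcount x)) = pcount x := by omega
    rw [hR] at hkD
    left
    by_contra hna
    push_neg at hna
    have := h2c k
    rw [Set.mem_Ioo] at this
    push_neg at this
    have hxk : b ≤ x k := this (by linarith)
    exact hkD (pos_mem_topM x le_rfl (pcount_le_card x) (by linarith))
  · -- τ₃ case
    have hpu : u ≤ pcount x :=
      (orderStat_pos_iff x (by omega) huJ'.le).mp (by linarith)
    have hR : max l (min u (pcount x)) = u := by omega
    rw [hR] at hkD
    right
    have hgap : d ≤ orderStat x u - orderStat x (u + 1) := by
      rcases h3b with h | h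
      · omega
      · exact h
    have hnsub : ¬ topM x u ⊆ A := by
      intro hsub
      have hsub' : topM x u ⊆ A.erase k :=
        fun a ha => Finset.mem_erase.mpr ⟨fun hh => hkD (hh ▸ ha), hsub ha⟩
      have := Finset.card_le_card hsub'
      rw [Finset.card_erase_of_mem hkA, topM_card x huJ'.le] at this
      omega
    obtain ⟨j, hjD, hjA⟩ := Finset.not_subset.mp hnsub
    refine ⟨j, hjA, ?_⟩
    have h1 := le_of_not_mem_topM x huJ' hkD
    have h2 := le_of_mem_topM x (by omega) huJ'.le hjD
    linarith

end GIComb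
section GIMain

variable {J : ℕ}

lemma giR_ge (lam : Fin J → ℕ → ℝ) (l u : ℕ) (a b c d : ℝ) :
    l ≤ giR lam l u a b c d := le_max_left _ _

lemma giR_le (lam : Fin J → ℕ → ℝ) {l u : ℕ} (hlu : l ≤ u) (a b c d : ℝ) :
    giR lam l u a b c d ≤ u := max_le hlu (min_le_left _ _)

lemma giV_main (lam : Fin J → ℕ → ℝ) {l u : ℕ} {a b c d : ℝ}
    (hJ : 2 ≤ J) (hl1 : 1 ≤ l) (hlu : l < u) (huJ : u ≤ J - 1) (ha0 : 0 < a) (hb0 : 0 < b)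
    (A : Finset (Fin J)) (hAl : l ≤ A.card)
    (hne : ∃ n, 1 ≤ n ∧ giCond (fun j => lam j n) l u a b c d) :
    1 ≤ giT lam l u a b c d ∧
    (giD lam l u a b c d \ A).card ≤ giR lam l u a b c d ∧
    ((giD lam l u a b c d \ A).Nonempty →
      ∃ j, j ∉ A ∧ (b ≤ lam j (giT lam l u a b c d) ∨
        ∃ k ∈ A, c ≤ lam j (giT lam l u a b c d) - lam k (giT lam l u a b c d))) := by
  have hmem : giT lam l u a b c d ∈
      {n | 1 ≤ n ∧ giCond (fun j => lam j n) l u a b c d} := Nat.sInf_mem hne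
  obtain ⟨hT1, hcond⟩ := hmem
  have hD : giD lam l u a b c d
      = topM (fun j => lam j (giT lam l u a b c d)) (giR lam l u a b c d) := rfl
  have hR : giR lam l u a b c d
      = max l (min u (pcount fun j => lam j (giT lam l u a b c d))) := rfl
  have hRu : giR lam l u a b c d ≤ u := giR_le lam hlu.le a b c d
  refine ⟨hT1, ?_, ?_⟩
  · calc (giD lam l u a b c d \ A).card ≤ (giD lam l u a b c d).card :=
        Finset.card_le_card Finset.sdiff_subset
    _ = giR lam l u a b c d := by
        rw [hD]
        exact topM_card _ (by omega)
  · rintro ⟨j, hj⟩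
    rw [Finset.mem_sdiff] at hj
    obtain ⟨hjD, hjA⟩ := hj
    rw [hD, hR] at hjD
    refine ⟨j, hjA, ?_⟩
    rcases giV_cases (fun j => lam j (giT lam l u a b c d)) hl1 hlu huJ hJ ha0 hb0 A hAl
      hcond hjD hjA with hcase | ⟨k, hkA, hkc⟩
    · exact Or.inl hcase
    · exact Or.inr ⟨k, hkA, by linarith⟩

lemma giW_main (lam : Fin J → ℕ → ℝ) {l u : ℕ} {a b c d : ℝ}
    (hJ : 2 ≤ J) (hl1 : 1 ≤ l) (hlu : l < u) (huJ : u ≤ J - 1) (ha0 : 0 < a) (hb0 : 0 < b)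
    (A : Finset (Fin J)) (hAu : A.card ≤ u)
    (hne : ∃ n, 1 ≤ n ∧ giCond (fun j => lam j n) l u a b c d) :
    1 ≤ giT lam l u a b c d ∧
    (A \ giD lam l u a b c d).card ≤ J - giR lam l u a b c d ∧
    ((A \ giD lam l u a b c d).Nonempty →
      ∃ k ∈ A, (lam k (giT lam l u a b c d) ≤ -a ∨
        ∃ j, j ∉ A ∧ d ≤ lam j (giT lam l u a b c d) - lam k (giT lam l u a b c d))) := by
  have hmem : giT lam l u a b c d ∈
      {n | 1 ≤ n ∧ giCond (fun j => lam j n) l u a b c d} := Nat.sInf_mem hne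
  obtain ⟨hT1, hcond⟩ := hmem
  have hD : giD lam l u a b c d
      = topM (fun j => lam j (giT lam l u a b c d)) (giR lam l u a b c d) := rfl
  have hR : giR lam l u a b c d
      = max l (min u (pcount fun j => lam j (giT lam l u a b c d))) := rfl
  have hRu : giR lam l u a b c d ≤ u := giR_le lam hlu.le a b c d
  have hcardD : (giD lam l u a b c d).card = giR lam l u a b c d := by
    rw [hD]
    exact topM_card _ (by omega)
  refine ⟨hT1, ?_, ?_⟩
  · calc (A \ giD lam l u a b c d).card
        ≤ (Finset.univ \ giD lam l u a b c d).card :=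
        Finset.card_le_card (Finset.sdiff_subset_sdiff (Finset.subset_univ A) le_rfl)
    _ = J - giR lam l u a b c d := by
        rw [Finset.card_sdiff_of_subset (Finset.subset_univ _), hcardD]
        congr 1
        simp
  · rintro ⟨k, hk⟩
    rw [Finset.mem_sdiff] at hk
    obtain ⟨hkA, hkD⟩ := hk
    rw [hD, hR] at hkD
    refine ⟨k, hkA, ?_⟩
    rcases giW_cases (fun j => lam j (giT lam l u a b c d)) hl1 hlu huJ hJ ha0 hb0 A hAu
      hcond hkA hkD with hcase | ⟨j, hjA, hjd⟩
    · exact Or.inl hcase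
    · exact Or.inr ⟨j, hjA, by linarith⟩

end GIMain
section ChangeOfMeasure

open MeasureTheory

lemma chg_single {Z : Type*} [MeasurableSpace Z] (μ ν : Measure Z)
    [IsFiniteMeasure μ] [SigmaFinite ν]
    (hμν : μ ≪ ν) {S : Set Z} (hS : MeasurableSet S) {ε : ENNReal} (hε0 : ε ≠ 0) (hεtop : ε ≠ ⊤)
    (hbound : ∀ᵐ y ∂ν, y ∈ S → ε ≤ μ.rnDeriv ν y) :
    ν S ≤ ε⁻¹ * μ S := by
  have hb' : ∀ᵐ y ∂(ν.restrict S), ε ≤ μ.rnDeriv ν y := (ae_restrict_iff' hS).mpr hbound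
  have key : ε * ν S ≤ μ S := by
    calc ε * ν S = ∫⁻ _ in S, ε ∂ν := (setLIntegral_const S ε).symm
    _ ≤ ∫⁻ y in S, μ.rnDeriv ν y ∂ν := lintegral_mono_ae hb'
    _ = μ S := Measure.setLIntegral_rnDeriv' hμν hS
  rw [← ENNReal.div_eq_inv_mul]
  rw [ENNReal.le_div_iff_mul_le (Or.inl hε0) (Or.inl hεtop)]
  rwa [mul_comm]

lemma chg_pair {Z1 Z2 : Type*} [MeasurableSpace Z1] [MeasurableSpace Z2]
    (μ1 ν1 : Measure Z1) (μ2 ν2 : Measure Z2)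
    [IsFiniteMeasure μ1] [IsFiniteMeasure ν1] [IsFiniteMeasure μ2] [IsFiniteMeasure ν2]
    (h1 : μ1 ≪ ν1) (h2 : μ2 ≪ ν2)
    {S : Set (Z1 × Z2)} (hS : MeasurableSet S) {ε : ENNReal} (hε0 : ε ≠ 0) (hεtop : ε ≠ ⊤)
    (hbound : ∀ᵐ z ∂(ν1.prod ν2), z ∈ S →
      ε ≤ μ1.rnDeriv ν1 z.1 * μ2.rnDeriv ν2 z.2) :
    (ν1.prod ν2) S ≤ ε⁻¹ * (μ1.prod μ2) S := by
  set f := μ1.rnDeriv ν1 with hfdef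
  set g := μ2.rnDeriv ν2 with hgdef
  have hf : Measurable f := Measure.measurable_rnDeriv μ1 ν1
  have hg : Measurable g := Measure.measurable_rnDeriv μ2 ν2
  have hfg : Measurable fun z : Z1 × Z2 => f z.1 * g z.2 :=
    (hf.comp measurable_fst).mul (hg.comp measurable_snd)
  have key2 : ∫⁻ z in S, f z.1 * g z.2 ∂(ν1.prod ν2) = (μ1.prod μ2) S := by
    rw [← lintegral_indicator hS]
    rw [lintegral_prod _ (hfg.indicator hS).aemeasurable]
    have hinner : ∀ z1 : Z1,
        (∫⁻ z2, S.indicator (fun z : Z1 × Z2 => f z.1 * g z.2) (z1, z2) ∂ν2)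
          = f z1 * μ2 (Prod.mk z1 ⁻¹' S) := by
      intro z1
      have heq : (fun z2 => S.indicator (fun z : Z1 × Z2 => f z.1 * g z.2) (z1, z2))
          = fun z2 => f z1 * (Prod.mk z1 ⁻¹' S).indicator g z2 := by
        funext z2
        by_cases hz : (z1, z2) ∈ S
        · simp [Set.indicator_of_mem hz, Set.indicator_of_mem (show z2 ∈ Prod.mk z1 ⁻¹' S from hz)]
        · simp [Set.indicator_of_notMem hz,
            Set.indicator_of_notMem (show z2 ∉ Prod.mk z1 ⁻¹' S from hz)]
      rw [heq, lintegral_const_mul _ (hg.indicator (measurable_prodMk_left hS))]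
      congr 1
      rw [lintegral_indicator (measurable_prodMk_left hS)]
      exact Measure.setLIntegral_rnDeriv' h2 (measurable_prodMk_left hS)
    simp only [hinner]
    have hslice : Measurable fun z1 => μ2 (Prod.mk z1 ⁻¹' S) :=
      measurable_measure_prodMk_left hS
    show (∫⁻ x, (f * fun z1 => μ2 (Prod.mk z1 ⁻¹' S)) x ∂ν1) = _
    rw [← lintegral_withDensity_eq_lintegral_mul ν1 hf hslice]
    rw [Measure.withDensity_rnDeriv_eq _ _ h1]
    exact (Measure.prod_apply hS).symm
  have hb' : ∀ᵐ z ∂((ν1.prod ν2).restrict S), ε ≤ f z.1 * g z.2 :=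
    (ae_restrict_iff' hS).mpr hbound
  have key : ε * (ν1.prod ν2) S ≤ (μ1.prod μ2) S := by
    calc ε * (ν1.prod ν2) S = ∫⁻ _ in S, ε ∂(ν1.prod ν2) := (setLIntegral_const S ε).symm
    _ ≤ ∫⁻ z in S, f z.1 * g z.2 ∂(ν1.prod ν2) := lintegral_mono_ae hb'
    _ = (μ1.prod μ2) S := key2
  rw [← ENNReal.div_eq_inv_mul]
  rw [ENNReal.le_div_iff_mul_le (Or.inl hε0) (Or.inl hεtop)]
  rwa [mul_comm]

end ChangeOfMeasure
section VilleGen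

open MeasureTheory

lemma ville_gen {Ω' : Type*} [MeasurableSpace Ω'] {Z : ℕ → Type*} [∀ n, MeasurableSpace (Z n)]
    (ν μ : Measure Ω') [IsProbabilityMeasure μ]
    (π : ∀ n, Ω' → Z n) (hπ : ∀ n, Measurable (π n))
    (W : ∀ n, Set (Z n)) (hW : ∀ n, MeasurableSet (W n))
    (ρ : ∀ m n, m < n → Z n → Z m) (hρ : ∀ m n h, Measurable (ρ m n h))
    (hcomp : ∀ m n (h : m < n) x, ρ m n h (π n x) = π m x)
    {ε : ENNReal}
    (hkey : ∀ n, 1 ≤ n → ∀ S : Set (Z n), MeasurableSet S → S ⊆ W n →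
        ν ((π n) ⁻¹' S) ≤ ε * μ ((π n) ⁻¹' S)) :
    ν (⋃ n, ⋃ _ : 1 ≤ n, (π n) ⁻¹' (W n)) ≤ ε := by
  classical
  -- first-entrance sets at the observation level
  set S : ∀ n, Set (Z n) := fun n =>
    W n ∩ ⋂ m, ⋂ _ : 1 ≤ m, ⋂ hmn : m < n, (ρ m n hmn) ⁻¹' (W m)ᶜ with hSdef
  have hSmeas : ∀ n, MeasurableSet (S n) := by
    intro n
    refine (hW n).inter ?_
    refine MeasurableSet.iInter fun m => MeasurableSet.iInter fun _ =>
      MeasurableSet.iInter fun hmn => (hρ m n hmn) (hW m).compl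
  have hSsub : ∀ n, S n ⊆ W n := fun n => Set.inter_subset_left
  set C : ℕ → Set Ω' := fun n => (π n) ⁻¹' (S n) with hCdef
  have hCmeas : ∀ n, MeasurableSet (C n) := fun n => (hπ n) (hSmeas n)
  have hCW : ∀ n x, x ∈ C n → π n x ∈ W n := fun n x hx => (hSsub n) hx
  have hCnot : ∀ m n x, 1 ≤ m → m < n → x ∈ C n → π m x ∉ W m := by
    intro m n x h1 hmn hx
    have := hx.2
    simp only [Set.mem_iInter] at this
    have h2 := this m h1 hmn
    rw [Set.mem_preimage, hcomp m n hmn x] at h2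
    exact h2
  have hdisj : Pairwise (Function.onFun Disjoint fun k => C (k + 1)) := by
    have main : ∀ k k', k < k' → Disjoint (C (k + 1)) (C (k' + 1)) := by
      intro k k' hlt
      refine Set.disjoint_left.mpr fun x hx hx' => ?_
      exact hCnot (k + 1) (k' + 1) x (by omega) (by omega) hx' (hCW _ x hx)
    intro k k' hkk
    rcases Nat.lt_or_ge k k' with hlt | hge
    · exact main k k' hlt
    · exact (main k' k (by omega)).symm
  have hunion : (⋃ n, ⋃ _ : 1 ≤ n, (π n) ⁻¹' (W n)) = ⋃ k, C (k + 1) := by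
    ext x
    simp only [Set.mem_iUnion, Set.mem_preimage]
    constructor
    · rintro ⟨n, hn, hx⟩
      have hex : ∃ n, 1 ≤ n ∧ π n x ∈ W n := ⟨n, hn, hx⟩
      set n₀ := Nat.find hex with hn₀
      obtain ⟨hn₀1, hn₀W⟩ := Nat.find_spec hex
      refine ⟨n₀ - 1, ?_⟩
      have hn₀eq : n₀ - 1 + 1 = n₀ := by omega
      rw [hn₀eq]
      refine ⟨hn₀W, ?_⟩
      simp only [Set.mem_iInter, Set.mem_preimage]
      intro m h1 hmn
      rw [hcomp m n₀ hmn x]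
      intro hmem
      exact Nat.find_min hex hmn ⟨h1, hmem⟩
    · rintro ⟨k, hk⟩
      exact ⟨k + 1, by omega, hCW _ x hk⟩
  rw [hunion]
  rw [measure_iUnion hdisj fun k => hCmeas (k + 1)]
  have hbound : ∀ k, ν (C (k + 1)) ≤ ε * μ (C (k + 1)) := by
    intro k
    exact hkey (k + 1) (by omega) (S (k + 1)) (hSmeas (k + 1)) (hSsub (k + 1))
  calc (∑' k, ν (C (k + 1))) ≤ ∑' k, ε * μ (C (k + 1)) := ENNReal.tsum_le_tsum hbound
  _ = ε * ∑' k, μ (C (k + 1)) := ENNReal.tsum_mul_left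
  _ ≤ ε * 1 := by
      refine mul_le_mul_right ?_ ε
      rw [← measure_iUnion hdisj fun k => hCmeas (k + 1)]
      exact prob_le_one
  _ = ε := mul_one ε

end VilleGen
section VilleApp

open MeasureTheory

variable {E E2 : Type*} [MeasurableSpace E] [MeasurableSpace E2]

lemma measurable_trunc (n : ℕ) : Measurable (fun (y : ℕ → E) (i : Fin n) => y i) :=
  measurable_pi_lambda _ fun i => measurable_pi_apply _

/-- The log-likelihood ratio as a function of the first `n` observations. -/
noncomputable def llrF (P0 P1 : Measure (ℕ → E)) (n : ℕ) (z : Fin n → E) : ℝ :=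
  Real.log (((P1.map fun y (i : Fin n) => y i).rnDeriv (P0.map fun y (i : Fin n) => y i)) z).toReal

lemma llr_eq_llrF (P0 P1 : Measure (ℕ → E)) (n : ℕ) (x : ℕ → E) :
    llr P0 P1 n x = llrF P0 P1 n (fun i : Fin n => x i) := rfl

lemma measurable_llrF (P0 P1 : Measure (ℕ → E)) (n : ℕ) : Measurable (llrF P0 P1 n) :=
  Real.measurable_log.comp (Measure.measurable_rnDeriv _ _).ennreal_toReal

lemma measurable_llr (P0 P1 : Measure (ℕ → E)) (n : ℕ) : Measurable (llr P0 P1 n) :=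
  (measurable_llrF P0 P1 n).comp (measurable_trunc n)

lemma ae_prod_mk {Z1 Z2 : Type*} [MeasurableSpace Z1] [MeasurableSpace Z2]
    {ν1 : Measure Z1} {ν2 : Measure Z2} [SFinite ν1] [SFinite ν2]
    {p1 : Z1 → Prop} {p2 : Z2 → Prop}
    (h1 : ∀ᵐ z ∂ν1, p1 z) (h2 : ∀ᵐ z ∂ν2, p2 z) :
    ∀ᵐ w ∂(ν1.prod ν2), p1 w.1 ∧ p2 w.2 := by
  rw [Filter.eventually_iff, mem_ae_iff] at h1 h2 ⊢
  have hsub : {w : Z1 × Z2 | p1 w.1 ∧ p2 w.2}ᶜ ⊆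
      ({z | p1 z}ᶜ ×ˢ (Set.univ : Set Z2)) ∪ ((Set.univ : Set Z1) ×ˢ {z | p2 z}ᶜ) := by
    intro w hw
    simp only [Set.mem_compl_iff, Set.mem_setOf_eq, not_and_or] at hw
    rcases hw with hw | hw
    · exact Or.inl (by simp [hw])
    · exact Or.inr (by simp [hw])
  refine measure_mono_null hsub (measure_union_null ?_ ?_) <;>
    rw [Measure.prod_prod] <;> simp [h1, h2]

lemma exp_inv_ofReal (t : ℝ) :
    (ENNReal.ofReal (Real.exp t))⁻¹ = ENNReal.ofReal (Real.exp (-t)) := by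
  rw [Real.exp_neg, ENNReal.ofReal_inv_of_pos (Real.exp_pos t)]

/-- Ville-type bound for upcrossings of the LLR over `t` under the null measure. -/
lemma ville_up (P0 P1 : Measure (ℕ → E)) [IsProbabilityMeasure P0] [IsProbabilityMeasure P1]
    (habs : ∀ n : ℕ,
      ((P1.map fun y (i : Fin n) => y i) ≪ (P0.map fun y (i : Fin n) => y i)) ∧
      ((P0.map fun y (i : Fin n) => y i) ≪ (P1.map fun y (i : Fin n) => y i)))
    (t : ℝ) :
    P0 (⋃ n, ⋃ _ : 1 ≤ n, {x | t ≤ llr P0 P1 n x}) ≤ ENNReal.ofReal (Real.exp (-t)) := by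
  have hW : ∀ n, MeasurableSet {z : Fin n → E | t ≤ llrF P0 P1 n z} :=
    fun n => measurableSet_le measurable_const (measurable_llrF P0 P1 n)
  refine ville_gen (Z := fun n => Fin n → E) (ε := ENNReal.ofReal (Real.exp (-t))) P0 P1
    (fun n (y : ℕ → E) (i : Fin n) => y i) (fun n => measurable_trunc n)
    (fun n => {z : Fin n → E | t ≤ llrF P0 P1 n z}) hW
    (fun m n h (z : Fin n → E) (i : Fin m) => z (Fin.castLE h.le i))
    (fun m n h => measurable_pi_lambda _ fun i => measurable_pi_apply _)
    (fun m n h x => rfl) ?_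
  intro n hn S hSmeas hSsub
  haveI : IsProbabilityMeasure (P0.map fun y (i : Fin n) => y i) :=
    Measure.isProbabilityMeasure_map (measurable_trunc n).aemeasurable
  haveI : IsProbabilityMeasure (P1.map fun y (i : Fin n) => y i) :=
    Measure.isProbabilityMeasure_map (measurable_trunc n).aemeasurable
  have h1 : P0 ((fun y (i : Fin n) => y i) ⁻¹' S)
      = (P0.map fun y (i : Fin n) => y i) S :=
    (Measure.map_apply (measurable_trunc n) hSmeas).symm
  have h2 : P1 ((fun y (i : Fin n) => y i) ⁻¹' S)
      = (P1.map fun y (i : Fin n) => y i) S :=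
    (Measure.map_apply (measurable_trunc n) hSmeas).symm
  rw [h1, h2]
  have hbound : ∀ᵐ z ∂(P0.map fun y (i : Fin n) => y i), z ∈ S →
      ENNReal.ofReal (Real.exp t) ≤
        ((P1.map fun y (i : Fin n) => y i).rnDeriv (P0.map fun y (i : Fin n) => y i)) z := by
    filter_upwards [Measure.rnDeriv_pos' (habs n).2,
      Measure.rnDeriv_lt_top (P1.map fun y (i : Fin n) => y i)
        (P0.map fun y (i : Fin n) => y i)] with z hpos hlt hzS
    have hts : t ≤ llrF P0 P1 n z := hSsub hzS
    have htr : 0 < (((P1.map fun y (i : Fin n) => y i).rnDeriv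
        (P0.map fun y (i : Fin n) => y i)) z).toReal :=
      ENNReal.toReal_pos hpos.ne' hlt.ne
    have hexp : Real.exp t ≤ (((P1.map fun y (i : Fin n) => y i).rnDeriv
        (P0.map fun y (i : Fin n) => y i)) z).toReal := by
      calc Real.exp t ≤ Real.exp (llrF P0 P1 n z) := Real.exp_le_exp.mpr hts
      _ = _ := Real.exp_log htr
    calc ENNReal.ofReal (Real.exp t) ≤ ENNReal.ofReal _ := ENNReal.ofReal_le_ofReal hexp
    _ = _ := ENNReal.ofReal_toReal hlt.ne
  have hch := chg_single _ _ (habs n).1 hSmeas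
    (by positivity : ENNReal.ofReal (Real.exp t) ≠ 0)
    ENNReal.ofReal_ne_top hbound
  rwa [exp_inv_ofReal] at hch

end VilleApp
section VilleApp2

open MeasureTheory

variable {E E2 : Type*} [MeasurableSpace E] [MeasurableSpace E2]

/-- Ville-type bound for downcrossings of the LLR below `-t` under the signal measure. -/
lemma ville_down (P0 P1 : Measure (ℕ → E)) [IsProbabilityMeasure P0] [IsProbabilityMeasure P1]
    (habs : ∀ n : ℕ,
      ((P1.map fun y (i : Fin n) => y i) ≪ (P0.map fun y (i : Fin n) => y i)) ∧
      ((P0.map fun y (i : Fin n) => y i) ≪ (P1.map fun y (i : Fin n) => y i)))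
    (t : ℝ) :
    P1 (⋃ n, ⋃ _ : 1 ≤ n, {x | llr P0 P1 n x ≤ -t}) ≤ ENNReal.ofReal (Real.exp (-t)) := by
  have hW : ∀ n, MeasurableSet {z : Fin n → E | llrF P0 P1 n z ≤ -t} :=
    fun n => measurableSet_le (measurable_llrF P0 P1 n) measurable_const
  refine ville_gen (Z := fun n => Fin n → E) (ε := ENNReal.ofReal (Real.exp (-t))) P1 P0
    (fun n (y : ℕ → E) (i : Fin n) => y i) (fun n => measurable_trunc n)
    (fun n => {z : Fin n → E | llrF P0 P1 n z ≤ -t}) hW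
    (fun m n h (z : Fin n → E) (i : Fin m) => z (Fin.castLE h.le i))
    (fun m n h => measurable_pi_lambda _ fun i => measurable_pi_apply _)
    (fun m n h x => rfl) ?_
  intro n hn S hSmeas hSsub
  haveI : IsProbabilityMeasure (P0.map fun y (i : Fin n) => y i) :=
    Measure.isProbabilityMeasure_map (measurable_trunc n).aemeasurable
  haveI : IsProbabilityMeasure (P1.map fun y (i : Fin n) => y i) :=
    Measure.isProbabilityMeasure_map (measurable_trunc n).aemeasurable
  have h1 : P1 ((fun y (i : Fin n) => y i) ⁻¹' S)
      = (P1.map fun y (i : Fin n) => y i) S :=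
    (Measure.map_apply (measurable_trunc n) hSmeas).symm
  have h2 : P0 ((fun y (i : Fin n) => y i) ⁻¹' S)
      = (P0.map fun y (i : Fin n) => y i) S :=
    (Measure.map_apply (measurable_trunc n) hSmeas).symm
  rw [h1, h2]
  have hbound : ∀ᵐ z ∂(P1.map fun y (i : Fin n) => y i), z ∈ S →
      ENNReal.ofReal (Real.exp t) ≤
        ((P0.map fun y (i : Fin n) => y i).rnDeriv (P1.map fun y (i : Fin n) => y i)) z := by
    filter_upwards [Measure.rnDeriv_pos (habs n).1,
      ((habs n).1).ae_le (Measure.rnDeriv_lt_top (P1.map fun y (i : Fin n) => y i)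
        (P0.map fun y (i : Fin n) => y i)),
      Measure.inv_rnDeriv (habs n).1] with z hpos hlt hinv hzS
    have hts : llrF P0 P1 n z ≤ -t := hSsub hzS
    have htr : 0 < (((P1.map fun y (i : Fin n) => y i).rnDeriv
        (P0.map fun y (i : Fin n) => y i)) z).toReal :=
      ENNReal.toReal_pos hpos.ne' hlt.ne
    have hexp : (((P1.map fun y (i : Fin n) => y i).rnDeriv
        (P0.map fun y (i : Fin n) => y i)) z).toReal ≤ Real.exp (-t) := by
      calc (((P1.map fun y (i : Fin n) => y i).rnDeriv
          (P0.map fun y (i : Fin n) => y i)) z).toReal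
          = Real.exp (llrF P0 P1 n z) := (Real.exp_log htr).symm
      _ ≤ Real.exp (-t) := Real.exp_le_exp.mpr hts
    have hle : ((P1.map fun y (i : Fin n) => y i).rnDeriv
        (P0.map fun y (i : Fin n) => y i)) z ≤ ENNReal.ofReal (Real.exp (-t)) := by
      rw [← ENNReal.ofReal_toReal hlt.ne]
      exact ENNReal.ofReal_le_ofReal hexp
    rw [← hinv]
    calc ENNReal.ofReal (Real.exp t)
        = (ENNReal.ofReal (Real.exp (-t)))⁻¹ := by rw [exp_inv_ofReal (-t), neg_neg]
    _ ≤ _ := ENNReal.inv_le_inv.mpr hle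
  have hch := chg_single _ _ (habs n).2 hSmeas
    (by positivity : ENNReal.ofReal (Real.exp t) ≠ 0)
    ENNReal.ofReal_ne_top hbound
  rwa [exp_inv_ofReal] at hch

/-- Ville-type bound for upcrossings of a difference of LLRs of two independent streams,
under the measure where the first stream is null and the second is signal. -/
lemma ville_pair (P0a P1a : Measure (ℕ → E)) (P0b P1b : Measure (ℕ → E2))
    [IsProbabilityMeasure P0a] [IsProbabilityMeasure P1a]
    [IsProbabilityMeasure P0b] [IsProbabilityMeasure P1b]
    (habsa : ∀ n : ℕ,
      ((P1a.map fun y (i : Fin n) => y i) ≪ (P0a.map fun y (i : Fin n) => y i)) ∧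
      ((P0a.map fun y (i : Fin n) => y i) ≪ (P1a.map fun y (i : Fin n) => y i)))
    (habsb : ∀ n : ℕ,
      ((P1b.map fun y (i : Fin n) => y i) ≪ (P0b.map fun y (i : Fin n) => y i)) ∧
      ((P0b.map fun y (i : Fin n) => y i) ≪ (P1b.map fun y (i : Fin n) => y i)))
    (t : ℝ) :
    (P0a.prod P1b) (⋃ n, ⋃ _ : 1 ≤ n,
        {w : (ℕ → E) × (ℕ → E2) | t ≤ llr P0a P1a n w.1 - llr P0b P1b n w.2})
      ≤ ENNReal.ofReal (Real.exp (-t)) := by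
  have hW : ∀ n, MeasurableSet
      {z : (Fin n → E) × (Fin n → E2) | t ≤ llrF P0a P1a n z.1 - llrF P0b P1b n z.2} :=
    fun n => measurableSet_le measurable_const
      (((measurable_llrF P0a P1a n).comp measurable_fst).sub
        ((measurable_llrF P0b P1b n).comp measurable_snd))
  refine ville_gen (Z := fun n => (Fin n → E) × (Fin n → E2))
    (ε := ENNReal.ofReal (Real.exp (-t))) (P0a.prod P1b) (P1a.prod P0b)
    (fun n (w : (ℕ → E) × (ℕ → E2)) =>
      ((fun i : Fin n => w.1 i), (fun i : Fin n => w.2 i)))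
    (fun n => ((measurable_trunc n).comp measurable_fst).prodMk
      ((measurable_trunc n).comp measurable_snd))
    (fun n => {z : (Fin n → E) × (Fin n → E2) |
      t ≤ llrF P0a P1a n z.1 - llrF P0b P1b n z.2}) hW
    (fun m n h z => ((fun i : Fin m => z.1 (Fin.castLE h.le i)),
      (fun i : Fin m => z.2 (Fin.castLE h.le i))))
    (fun m n h => ((measurable_pi_lambda _ fun i => measurable_pi_apply _).comp
      measurable_fst).prodMk ((measurable_pi_lambda _ fun i =>
        measurable_pi_apply _).comp measurable_snd))
    (fun m n h x => rfl) ?_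
  intro n hn S hSmeas hSsub
  haveI h0a : IsProbabilityMeasure (P0a.map fun y (i : Fin n) => y i) :=
    Measure.isProbabilityMeasure_map (measurable_trunc n).aemeasurable
  haveI h1a : IsProbabilityMeasure (P1a.map fun y (i : Fin n) => y i) :=
    Measure.isProbabilityMeasure_map (measurable_trunc n).aemeasurable
  haveI h0b : IsProbabilityMeasure (P0b.map fun y (i : Fin n) => y i) :=
    Measure.isProbabilityMeasure_map (measurable_trunc n).aemeasurable
  haveI h1b : IsProbabilityMeasure (P1b.map fun y (i : Fin n) => y i) :=
    Measure.isProbabilityMeasure_map (measurable_trunc n).aemeasurable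
  have hπ : Measurable (fun w : (ℕ → E) × (ℕ → E2) =>
      ((fun i : Fin n => w.1 i), (fun i : Fin n => w.2 i))) :=
    ((measurable_trunc n).comp measurable_fst).prodMk
      ((measurable_trunc n).comp measurable_snd)
  have hmapν : (P0a.prod P1b).map (fun w : (ℕ → E) × (ℕ → E2) =>
      ((fun i : Fin n => w.1 i), (fun i : Fin n => w.2 i)))
      = (P0a.map fun y (i : Fin n) => y i).prod (P1b.map fun y (i : Fin n) => y i) := by
    rw [Measure.map_prod_map _ _ (measurable_trunc n) (measurable_trunc n)]
    rfl
  have hmapμ : (P1a.prod P0b).map (fun w : (ℕ → E) × (ℕ → E2) =>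
      ((fun i : Fin n => w.1 i), (fun i : Fin n => w.2 i)))
      = (P1a.map fun y (i : Fin n) => y i).prod (P0b.map fun y (i : Fin n) => y i) := by
    rw [Measure.map_prod_map _ _ (measurable_trunc n) (measurable_trunc n)]
    rfl
  rw [← Measure.map_apply hπ hSmeas, ← Measure.map_apply hπ hSmeas, hmapν, hmapμ]
  -- the a.e. bound on the product
  set g1 := (P1a.map fun y (i : Fin n) => y i).rnDeriv (P0a.map fun y (i : Fin n) => y i)
    with hg1
  set g2 := (P1b.map fun y (i : Fin n) => y i).rnDeriv (P0b.map fun y (i : Fin n) => y i)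
    with hg2
  have hp1 : ∀ᵐ z1 ∂(P0a.map fun y (i : Fin n) => y i), 0 < g1 z1 ∧ g1 z1 < ⊤ :=
    (Measure.rnDeriv_pos' (habsa n).2).and (Measure.rnDeriv_lt_top _ _)
  have hp2 : ∀ᵐ z2 ∂(P1b.map fun y (i : Fin n) => y i), (0 < g2 z2 ∧ g2 z2 < ⊤) ∧
      (g2 z2)⁻¹ = ((P0b.map fun y (i : Fin n) => y i).rnDeriv
        (P1b.map fun y (i : Fin n) => y i)) z2 :=
    ((Measure.rnDeriv_pos (habsb n).1).and
      (((habsb n).1).ae_le (Measure.rnDeriv_lt_top _ _))).and (Measure.inv_rnDeriv (habsb n).1)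
  have hbound : ∀ᵐ w ∂((P0a.map fun y (i : Fin n) => y i).prod
      (P1b.map fun y (i : Fin n) => y i)), w ∈ S →
      ENNReal.ofReal (Real.exp t) ≤
        ((P1a.map fun y (i : Fin n) => y i).rnDeriv
          (P0a.map fun y (i : Fin n) => y i)) w.1 *
        ((P0b.map fun y (i : Fin n) => y i).rnDeriv
          (P1b.map fun y (i : Fin n) => y i)) w.2 := by
    filter_upwards [ae_prod_mk hp1 hp2] with w hw hwS
    obtain ⟨⟨h1pos, h1lt⟩, ⟨⟨h2pos, h2lt⟩, h2inv⟩⟩ := hw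
    have hts : t ≤ llrF P0a P1a n w.1 - llrF P0b P1b n w.2 := hSsub hwS
    have h1tr : 0 < (g1 w.1).toReal := ENNReal.toReal_pos h1pos.ne' h1lt.ne
    have h2tr : 0 < (g2 w.2).toReal := ENNReal.toReal_pos h2pos.ne' h2lt.ne
    have hkey : Real.exp t * (g2 w.2).toReal ≤ (g1 w.1).toReal := by
      have : Real.exp t * (g2 w.2).toReal
          = Real.exp (t + llrF P0b P1b n w.2) := by
        rw [Real.exp_add]
        congr 1
        exact (Real.exp_log h2tr).symm
      rw [this, ← Real.exp_log h1tr]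
      have e1 : llrF P0a P1a n w.1 = Real.log ((g1 w.1).toReal) := rfl
      have e2 : llrF P0b P1b n w.2 = Real.log ((g2 w.2).toReal) := rfl
      exact Real.exp_le_exp.mpr (by rw [← e1]; linarith [hts, e2.symm.trans_le (le_refl _)])
    have hg1ge : ENNReal.ofReal (Real.exp t) * g2 w.2 ≤ g1 w.1 := by
      calc ENNReal.ofReal (Real.exp t) * g2 w.2
          = ENNReal.ofReal (Real.exp t) * ENNReal.ofReal (g2 w.2).toReal := by
            rw [ENNReal.ofReal_toReal h2lt.ne]
      _ = ENNReal.ofReal (Real.exp t * (g2 w.2).toReal) := by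
            rw [ENNReal.ofReal_mul (Real.exp_pos t).le]
      _ ≤ ENNReal.ofReal (g1 w.1).toReal := ENNReal.ofReal_le_ofReal hkey
      _ = g1 w.1 := ENNReal.ofReal_toReal h1lt.ne
    rw [← h2inv]
    calc ENNReal.ofReal (Real.exp t)
        = ENNReal.ofReal (Real.exp t) * (g2 w.2 * (g2 w.2)⁻¹) := by
          rw [ENNReal.mul_inv_cancel h2pos.ne' h2lt.ne, mul_one]
    _ = (ENNReal.ofReal (Real.exp t) * g2 w.2) * (g2 w.2)⁻¹ := by rw [mul_assoc]
    _ ≤ g1 w.1 * (g2 w.2)⁻¹ := mul_le_mul_left hg1ge _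
  have hch := chg_pair (P1a.map fun y (i : Fin n) => y i)
    (P0a.map fun y (i : Fin n) => y i)
    (P0b.map fun y (i : Fin n) => y i)
    (P1b.map fun y (i : Fin n) => y i)
    (habsa n).1 (habsb n).2 hSmeas
    (by positivity : ENNReal.ofReal (Real.exp t) ≠ 0)
    ENNReal.ofReal_ne_top hbound
  rwa [exp_inv_ofReal] at hch

end VilleApp2
section Term

open MeasureTheory Filter

variable {E : Type*} [MeasurableSpace E]

lemma measurableSet_tendsto_top (P0 P1 : Measure (ℕ → E)) :
    MeasurableSet {x : ℕ → E | Tendsto (fun n => llr P0 P1 n x) atTop atTop} := by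
  have heq : {x : ℕ → E | Tendsto (fun n => llr P0 P1 n x) atTop atTop} =
      ⋂ M : ℕ, ⋃ N : ℕ, ⋂ n : ℕ, ⋂ _ : N ≤ n, {x | (M : ℝ) ≤ llr P0 P1 n x} := by
    ext x
    simp only [Set.mem_setOf_eq, Set.mem_iInter, Set.mem_iUnion]
    constructor
    · intro h M
      exact eventually_atTop.mp (h.eventually_ge_atTop (M : ℝ))
    · intro h
      rw [tendsto_atTop_atTop]
      intro bb
      obtain ⟨M, hM⟩ := exists_nat_ge bb
      obtain ⟨N, hN⟩ := h M
      exact ⟨N, fun n hn => le_trans hM (hN n hn)⟩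
  rw [heq]
  exact MeasurableSet.iInter fun M => MeasurableSet.iUnion fun N =>
    MeasurableSet.iInter fun n => MeasurableSet.iInter fun _ =>
      measurableSet_le measurable_const (measurable_llr P0 P1 n)

lemma measurableSet_tendsto_bot (P0 P1 : Measure (ℕ → E)) :
    MeasurableSet {x : ℕ → E | Tendsto (fun n => llr P0 P1 n x) atTop atBot} := by
  have heq : {x : ℕ → E | Tendsto (fun n => llr P0 P1 n x) atTop atBot} =
      ⋂ M : ℕ, ⋃ N : ℕ, ⋂ n : ℕ, ⋂ _ : N ≤ n, {x | llr P0 P1 n x ≤ -(M : ℝ)} := by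
    ext x
    simp only [Set.mem_setOf_eq, Set.mem_iInter, Set.mem_iUnion]
    constructor
    · intro h M
      exact eventually_atTop.mp (h.eventually_le_atBot (-(M : ℝ)))
    · intro h
      rw [tendsto_atTop_atBot]
      intro bb
      obtain ⟨M, hM⟩ := exists_nat_ge (-bb)
      obtain ⟨N, hN⟩ := h M
      exact ⟨N, fun n hn => le_trans (hN n hn) (by linarith)⟩
  rw [heq]
  exact MeasurableSet.iInter fun M => MeasurableSet.iUnion fun N =>
    MeasurableSet.iInter fun n => MeasurableSet.iInter fun _ =>
      measurableSet_le (measurable_llr P0 P1 n) measurable_const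

end Term
section Helper

open MeasureTheory

lemma bound_integral {Ω : Type*} [MeasurableSpace Ω] (PA : Measure Ω) [IsProbabilityMeasure PA]
    (f : Ω → ℝ) (G : Set Ω) (hG : MeasurableSet G) {α' : ℝ} (hα' : 0 ≤ α')
    (hf : ∀ᵐ ω ∂PA, f ω ≤ G.indicator (fun _ => (1 : ℝ)) ω)
    (hPG : PA G ≤ ENNReal.ofReal α') :
    ∫ ω, f ω ∂PA ≤ α' := by
  by_cases hint : Integrable f PA
  · calc ∫ ω, f ω ∂PA ≤ ∫ ω, G.indicator (fun _ => (1 : ℝ)) ω ∂PA :=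
        integral_mono_ae hint ((integrable_const (1 : ℝ)).indicator hG) hf
    _ = (PA G).toReal • (1 : ℝ) := integral_indicator_const (1 : ℝ) hG
    _ = (PA G).toReal := by rw [smul_eq_mul, mul_one]
    _ ≤ α' := ENNReal.toReal_le_of_le_ofReal hα' hPG
  · rw [integral_undef hint]
    exact hα'

end Helper
section Arith

lemma real_arith_V {J l u m : ℕ} {α : ℝ} (hα0 : 0 < α) (hl1 : 1 ≤ l) (hlm : l ≤ m)
    (hmu : m ≤ u) (huJ : u ≤ J - 1) (hJ : 2 ≤ J) :
    ((J - m : ℕ) : ℝ) * (α / (J : ℝ))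
      + ((J - m : ℕ) : ℝ) * ((m : ℝ) * (α / (((J - l) * J : ℕ) : ℝ))) ≤ α := by
  have hmJ : m ≤ J := by omega
  have hlJ : l ≤ J := by omega
  have h1 : ((J - m : ℕ) : ℝ) = (J : ℝ) - m := by
    rw [Nat.cast_sub hmJ]
  have h2 : (((J - l) * J : ℕ) : ℝ) = ((J : ℝ) - l) * J := by
    rw [Nat.cast_mul, Nat.cast_sub hlJ]
  have hJpos : (0 : ℝ) < J := by exact_mod_cast (by omega : 0 < J)
  have hJl : (0 : ℝ) < (J : ℝ) - l := by
    have : l < J := by omega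
    have : (l : ℝ) < J := by exact_mod_cast this
    linarith
  have hlm' : (l : ℝ) ≤ m := by exact_mod_cast hlm
  have hm0 : (0 : ℝ) ≤ m := Nat.cast_nonneg m
  have hmJ' : (m : ℝ) ≤ J := by exact_mod_cast hmJ
  rw [h1, h2, ← sub_nonneg]
  have expand : α - (((J : ℝ) - m) * (α / (J : ℝ))
      + ((J : ℝ) - m) * ((m : ℝ) * (α / (((J : ℝ) - l) * J))))
      = α * ((m : ℝ) * ((m : ℝ) - l)) / (((J : ℝ) - l) * (J : ℝ)) := by
    field_simp
    ring
  rw [expand]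
  apply div_nonneg _ (by positivity)
  apply mul_nonneg hα0.le
  apply mul_nonneg hm0
  linarith

lemma real_arith_W {J l u m : ℕ} {β : ℝ} (hβ0 : 0 < β) (hl1 : 1 ≤ l) (hlm : l ≤ m)
    (hmu : m ≤ u) (huJ : u ≤ J - 1) (hJ : 2 ≤ J) :
    (m : ℝ) * (β / (J : ℝ))
      + (m : ℝ) * (((J - m : ℕ) : ℝ) * (β / ((u * J : ℕ) : ℝ))) ≤ β := by
  have hmJ : m ≤ J := by omega
  have h1 : ((J - m : ℕ) : ℝ) = (J : ℝ) - m := by rw [Nat.cast_sub hmJ]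
  have h2 : ((u * J : ℕ) : ℝ) = (u : ℝ) * J := by rw [Nat.cast_mul]
  have hJpos : (0 : ℝ) < J := by exact_mod_cast (by omega : 0 < J)
  have hupos : (0 : ℝ) < u := by exact_mod_cast (by omega : 0 < u)
  have hmu' : (m : ℝ) ≤ u := by exact_mod_cast hmu
  have hm0 : (0 : ℝ) ≤ m := Nat.cast_nonneg m
  have hmJ' : (m : ℝ) ≤ J := by exact_mod_cast hmJ
  rw [h1, h2, ← sub_nonneg]
  have expand : β - ((m : ℝ) * (β / (J : ℝ))
      + (m : ℝ) * (((J : ℝ) - m) * (β / ((u : ℝ) * J))))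
      = β * (((u : ℝ) - m) * ((J : ℝ) - m)) / ((u : ℝ) * (J : ℝ)) := by
    field_simp
    ring
  rw [expand]
  apply div_nonneg _ (by positivity)
  apply mul_nonneg hβ0.le
  apply mul_nonneg <;> linarith

end Arith
/-- Admissibility of the gap-intersection rule for pFDR/pFNR control when the number of
signals is known to lie in `[ℓ, u]` with `1 ≤ ℓ < u ≤ J − 1`: with thresholds
`a = |log β| + log J`, `b = |log α| + log J`, `c = |log α| + log((J − ℓ)J)`,
`d = |log β| + log(uJ)`, under any signal set `A` with `ℓ ≤ |A| ≤ u` the rule terminates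
`P_A`-a.s. and satisfies `pFDR_A ≤ α` and `pFNR_A ≤ β`, where
`pFDR_A = E_A[(V/R)·1{R ≥ 1}]/P_A(R ≥ 1)`,
`pFNR_A = E_A[(W/(J−R))·1{R ≤ J−1}]/P_A(R ≤ J−1)`, `V = |D \ A|`, `W = |A \ D|`,
`R = |D| = p′` (here `ℓ ≤ R ≤ u` always, so `R ≥ 1` and `J − R ≥ 1`). -/
theorem stmt17 (J : ℕ) (hJ : 2 ≤ J) (E : Fin J → Type*) [∀ j, MeasurableSpace (E j)]
    (P0 P1 : ∀ j, Measure (ℕ → E j))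
    [∀ j, IsProbabilityMeasure (P0 j)] [∀ j, IsProbabilityMeasure (P1 j)]
    (habs : ∀ (j : Fin J) (n : ℕ),
      (P1 j).map (fun y (i : Fin n) => y i) ≪ (P0 j).map (fun y (i : Fin n) => y i) ∧
      (P0 j).map (fun y (i : Fin n) => y i) ≪ (P1 j).map (fun y (i : Fin n) => y i))
    (hnull : ∀ j, ∀ᵐ x ∂(P0 j), Tendsto (fun n => llr (P0 j) (P1 j) n x) atTop atBot)
    (halt : ∀ j, ∀ᵐ x ∂(P1 j), Tendsto (fun n => llr (P0 j) (P1 j) n x) atTop atTop)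
    (l u : ℕ) (hl1 : 1 ≤ l) (hlu : l < u) (huJ : u ≤ J - 1)
    (α β : ℝ) (hα : α ∈ Set.Ioo (0 : ℝ) 1) (hβ : β ∈ Set.Ioo (0 : ℝ) 1)
    (a b c d : ℝ)
    (ha : a = |Real.log β| + Real.log (J : ℝ))
    (hb : b = |Real.log α| + Real.log (J : ℝ))
    (hc : c = |Real.log α| + Real.log (((J - l) * J : ℕ) : ℝ))
    (hd : d = |Real.log β| + Real.log ((u * J : ℕ) : ℝ))
    (A : Finset (Fin J)) (hAl : l ≤ A.card) (hAu : A.card ≤ u)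
    (PA : Measure (∀ j, ℕ → E j)) [IsProbabilityMeasure PA]
    (hind : iIndepFun (fun j ω => ω j) PA)
    (hlaw : ∀ j, PA.map (fun ω => ω j) = if j ∈ A then P1 j else P0 j) :
    -- the gap-intersection rule terminates `P_A`-almost surely:
    (∀ᵐ ω ∂PA, ∃ n : ℕ, 1 ≤ n ∧
      giCond (fun j => llr (P0 j) (P1 j) n (ω j)) l u a b c d) ∧
    -- pFDR_A ≤ α:
    (∫ ω, (if 1 ≤ giR (fun j n => llr (P0 j) (P1 j) n (ω j)) l u a b c d then
        ((giD (fun j n => llr (P0 j) (P1 j) n (ω j)) l u a b c d \ A).card : ℝ)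
          / ((giR (fun j n => llr (P0 j) (P1 j) n (ω j)) l u a b c d : ℕ) : ℝ)
      else 0) ∂PA)
        / (PA {ω | 1 ≤ giR (fun j n => llr (P0 j) (P1 j) n (ω j)) l u a b c d}).toReal
      ≤ α ∧
    -- pFNR_A ≤ β:
    (∫ ω, (if giR (fun j n => llr (P0 j) (P1 j) n (ω j)) l u a b c d ≤ J - 1 then
        ((A \ giD (fun j n => llr (P0 j) (P1 j) n (ω j)) l u a b c d).card : ℝ)
          / ((J - giR (fun j n => llr (P0 j) (P1 j) n (ω j)) l u a b c d : ℕ) : ℝ)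
      else 0) ∂PA)
        / (PA {ω | giR (fun j n => llr (P0 j) (P1 j) n (ω j)) l u a b c d ≤ J - 1}).toReal
      ≤ β := by
  classical
  -- ===== basic numeric facts =====
  have hJpos : (0:ℝ) < (J:ℝ) := by exact_mod_cast (by omega : 0 < J)
  have hJR : (1:ℝ) < (J:ℝ) := by exact_mod_cast (by omega : 1 < J)
  have hlogJ : (0:ℝ) < Real.log J := Real.log_pos hJR
  have hlogα : Real.log α < 0 := Real.log_neg hα.1 hα.2
  have hlogβ : Real.log β < 0 := Real.log_neg hβ.1 hβ.2
  have ha0 : 0 < a := by rw [ha, abs_of_neg hlogβ]; linarith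
  have hb0 : 0 < b := by rw [hb, abs_of_neg hlogα]; linarith
  have hAJ : A.card ≤ J := by simpa using A.card_le_univ
  have huJ2 : u < J := by omega
  have hcast1 : (0:ℝ) < (((J - l) * J : ℕ) : ℝ) := by
    exact_mod_cast Nat.mul_pos (by omega : 0 < J - l) (by omega : 0 < J)
  have hcast2 : (0:ℝ) < ((u * J : ℕ) : ℝ) := by
    exact_mod_cast Nat.mul_pos (by omega : 0 < u) (by omega : 0 < J)
  have hexpb : Real.exp (-b) = α / (J:ℝ) := by
    rw [hb, abs_of_neg hlogα, neg_add, neg_neg, Real.exp_add, Real.exp_log hα.1,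
      Real.exp_neg, Real.exp_log hJpos, div_eq_mul_inv]
  have hexpa : Real.exp (-a) = β / (J:ℝ) := by
    rw [ha, abs_of_neg hlogβ, neg_add, neg_neg, Real.exp_add, Real.exp_log hβ.1,
      Real.exp_neg, Real.exp_log hJpos, div_eq_mul_inv]
  have hexpc : Real.exp (-c) = α / (((J - l) * J : ℕ) : ℝ) := by
    rw [hc, abs_of_neg hlogα, neg_add, neg_neg, Real.exp_add, Real.exp_log hα.1,
      Real.exp_neg, Real.exp_log hcast1, div_eq_mul_inv]
  have hexpd : Real.exp (-d) = β / ((u * J : ℕ) : ℝ) := by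
    rw [hd, abs_of_neg hlogβ, neg_add, neg_neg, Real.exp_add, Real.exp_log hβ.1,
      Real.exp_neg, Real.exp_log hcast2, div_eq_mul_inv]
  -- ===== almost-sure termination =====
  have htendsto : ∀ᵐ ω ∂PA, ∀ j, Tendsto (fun n => llr (P0 j) (P1 j) n (ω j)) atTop
      (if j ∈ A then atTop else atBot) := by
    rw [ae_all_iff]
    intro j
    by_cases hj : j ∈ A
    · simp only [hj, if_true]
      have h1 : ∀ᵐ x ∂(PA.map fun ω => ω j),
          Tendsto (fun n => llr (P0 j) (P1 j) n x) atTop atTop := by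
        rw [hlaw j, if_pos hj]; exact halt j
      exact (ae_map_iff (measurable_pi_apply j).aemeasurable
        (measurableSet_tendsto_top (P0 j) (P1 j))).mp h1
    · simp only [hj, if_false]
      have h1 : ∀ᵐ x ∂(PA.map fun ω => ω j),
          Tendsto (fun n => llr (P0 j) (P1 j) n x) atTop atBot := by
        rw [hlaw j, if_neg hj]; exact hnull j
      exact (ae_map_iff (measurable_pi_apply j).aemeasurable
        (measurableSet_tendsto_bot (P0 j) (P1 j))).mp h1
  have hterm : ∀ᵐ ω ∂PA, ∃ n : ℕ, 1 ≤ n ∧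
      giCond (fun j => llr (P0 j) (P1 j) n (ω j)) l u a b c d := by
    filter_upwards [htendsto] with ω hω
    have hev : ∀ᶠ n in atTop, ∀ j : Fin J,
        (if j ∈ A then b ≤ llr (P0 j) (P1 j) n (ω j)
          else llr (P0 j) (P1 j) n (ω j) ≤ -a) := by
      rw [eventually_all]
      intro j
      by_cases hj : j ∈ A
      · simp only [hj, if_true]
        have := hω j; rw [if_pos hj] at this
        exact this.eventually_ge_atTop b
      · simp only [hj, if_false]
        have := hω j; rw [if_neg hj] at this
        exact this.eventually_le_atBot (-a)
    obtain ⟨n, hn1, hn⟩ := ((eventually_ge_atTop 1).and hev).exists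
    refine ⟨n, hn1, ?_⟩
    have hpc : pcount (fun j => llr (P0 j) (P1 j) n (ω j)) = A.card := by
      unfold pcount
      congr 1
      ext j
      simp only [Finset.mem_filter, Finset.mem_univ, true_and]
      by_cases hj : j ∈ A
      · have := hn j; rw [if_pos hj] at this
        simp only [hj, iff_true]
        linarith
      · have := hn j; rw [if_neg hj] at this
        simp only [hj, iff_false, not_lt]
        linarith
    right; left
    refine ⟨by omega, by omega, fun j => ?_⟩
    rw [Set.mem_Ioo]
    push_neg
    intro hgt
    by_cases hj : j ∈ A
    · have := hn j; rw [if_pos hj] at this; linarith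
    · have := hn j; rw [if_neg hj] at this; linarith
  refine ⟨hterm, ?_, ?_⟩
  · -- ===== pFDR bound =====
    have huniv : {ω : ∀ j, ℕ → E j |
        1 ≤ giR (fun j n => llr (P0 j) (P1 j) n (ω j)) l u a b c d} = Set.univ :=
      Set.eq_univ_of_forall fun ω => le_trans hl1 (le_max_left _ _)
    rw [huniv, measure_univ, ENNReal.toReal_one, div_one]
    set UB : (j : Fin J) → Set (ℕ → E j) := fun j =>
      ⋃ n, ⋃ _ : 1 ≤ n, {x | b ≤ llr (P0 j) (P1 j) n x} with hUB
    set UC : (j : Fin J) → (k : Fin J) → Set ((ℕ → E j) × (ℕ → E k)) := fun j k =>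
      ⋃ n, ⋃ _ : 1 ≤ n, {w | c ≤ llr (P0 j) (P1 j) n w.1 - llr (P0 k) (P1 k) n w.2} with hUC
    have hUBmeas : ∀ j, MeasurableSet (UB j) := fun j =>
      MeasurableSet.iUnion fun n => MeasurableSet.iUnion fun _ =>
        measurableSet_le measurable_const (measurable_llr _ _ n)
    have hUCmeas : ∀ j k, MeasurableSet (UC j k) := fun j k =>
      MeasurableSet.iUnion fun n => MeasurableSet.iUnion fun _ =>
        measurableSet_le measurable_const
          (((measurable_llr _ _ n).comp measurable_fst).sub
            ((measurable_llr _ _ n).comp measurable_snd))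
    set GV : Set (∀ j, ℕ → E j) :=
      (⋃ j ∈ Aᶜ, (fun ω : ∀ j, ℕ → E j => ω j) ⁻¹' UB j) ∪
        ⋃ j ∈ Aᶜ, ⋃ k ∈ A, (fun ω : ∀ j, ℕ → E j => (ω j, ω k)) ⁻¹' UC j k with hGVdef
    have hGVmeas : MeasurableSet GV := by
      refine MeasurableSet.union ?_ ?_
      · exact MeasurableSet.biUnion (Finset.countable_toSet _)
          fun j _ => (measurable_pi_apply j) (hUBmeas j)
      · exact MeasurableSet.biUnion (Finset.countable_toSet _) fun j _ =>
          MeasurableSet.biUnion (Finset.countable_toSet _) fun k _ =>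
            ((measurable_pi_apply j).prodMk (measurable_pi_apply k)) (hUCmeas j k)
    have hBVle : ∀ j ∈ Aᶜ, PA ((fun ω : ∀ j, ℕ → E j => ω j) ⁻¹' UB j)
        ≤ ENNReal.ofReal (α / (J : ℝ)) := by
      intro j hj
      rw [← Measure.map_apply (measurable_pi_apply j) (hUBmeas j), hlaw j,
        if_neg (Finset.mem_compl.mp hj)]
      calc (P0 j) (UB j) ≤ ENNReal.ofReal (Real.exp (-b)) :=
          ville_up (P0 j) (P1 j) (habs j) b
      _ = _ := by rw [hexpb]
    have hCVle : ∀ j ∈ Aᶜ, ∀ k ∈ A, PA ((fun ω : ∀ j, ℕ → E j => (ω j, ω k)) ⁻¹' UC j k)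
        ≤ ENNReal.ofReal (α / (((J - l) * J : ℕ) : ℝ)) := by
      intro j hj k hk
      have hjk : j ≠ k := fun h => (Finset.mem_compl.mp hj) (h ▸ hk)
      have hIF : IndepFun (fun ω : ∀ j, ℕ → E j => ω j) (fun ω => ω k) PA :=
        hind.indepFun hjk
      have hmap : PA.map (fun ω : ∀ j, ℕ → E j => (ω j, ω k)) = (P0 j).prod (P1 k) := by
        rw [(indepFun_iff_map_prod_eq_prod_map_map (measurable_pi_apply j).aemeasurable
          (measurable_pi_apply k).aemeasurable).mp hIF, hlaw j, hlaw k,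
          if_neg (Finset.mem_compl.mp hj), if_pos hk]
      rw [← Measure.map_apply ((measurable_pi_apply j).prodMk (measurable_pi_apply k))
        (hUCmeas j k), hmap]
      calc ((P0 j).prod (P1 k)) (UC j k) ≤ ENNReal.ofReal (Real.exp (-c)) :=
          ville_pair (P0 j) (P1 j) (P0 k) (P1 k) (habs j) (habs k) c
      _ = _ := by rw [hexpc]
    have hconv : ∀ (n : ℕ) (q : ℝ), (n : ENNReal) * ENNReal.ofReal q
        = ENNReal.ofReal ((n : ℝ) * q) := by
      intro n q
      rw [ENNReal.ofReal_mul (Nat.cast_nonneg n), ENNReal.ofReal_natCast]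
    have hAc : Aᶜ.card = J - A.card := by
      simp [Finset.card_compl]
    have hGVle : PA GV ≤ ENNReal.ofReal α := by
      calc PA GV ≤ PA (⋃ j ∈ Aᶜ, (fun ω : ∀ j, ℕ → E j => ω j) ⁻¹' UB j)
          + PA (⋃ j ∈ Aᶜ, ⋃ k ∈ A, (fun ω : ∀ j, ℕ → E j => (ω j, ω k)) ⁻¹' UC j k) :=
        measure_union_le _ _
      _ ≤ (∑ _j ∈ Aᶜ, ENNReal.ofReal (α / (J : ℝ)))
          + ∑ j ∈ Aᶜ, ∑ _k ∈ A, ENNReal.ofReal (α / (((J - l) * J : ℕ) : ℝ)) := by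
          refine add_le_add ((measure_biUnion_finset_le _ _).trans (Finset.sum_le_sum hBVle))
            ((measure_biUnion_finset_le _ _).trans (Finset.sum_le_sum fun j hj =>
              (measure_biUnion_finset_le _ _).trans (Finset.sum_le_sum (hCVle j hj))))
      _ = (Aᶜ.card : ENNReal) * ENNReal.ofReal (α / (J : ℝ))
          + (Aᶜ.card : ENNReal) * ((A.card : ENNReal)
            * ENNReal.ofReal (α / (((J - l) * J : ℕ) : ℝ))) := by
          simp [Finset.sum_const, nsmul_eq_mul, mul_assoc]
      _ = ENNReal.ofReal ((Aᶜ.card : ℝ) * (α / (J : ℝ)))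
          + ENNReal.ofReal ((Aᶜ.card : ℝ) * ((A.card : ℝ)
            * (α / (((J - l) * J : ℕ) : ℝ)))) := by
          rw [hconv, hconv, hconv]
      _ = ENNReal.ofReal ((Aᶜ.card : ℝ) * (α / (J : ℝ))
          + (Aᶜ.card : ℝ) * ((A.card : ℝ) * (α / (((J - l) * J : ℕ) : ℝ)))) := by
          have hq1 : (0:ℝ) ≤ (Aᶜ.card : ℝ) * (α / (J:ℝ)) :=
            mul_nonneg (Nat.cast_nonneg _) (div_nonneg hα.1.le hJpos.le)
          have hq2 : (0:ℝ) ≤ (Aᶜ.card : ℝ) * ((A.card : ℝ)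
              * (α / (((J - l) * J : ℕ) : ℝ))) :=
            mul_nonneg (Nat.cast_nonneg _) (mul_nonneg (Nat.cast_nonneg _)
              (div_nonneg hα.1.le hcast1.le))
          rw [ENNReal.ofReal_add hq1 hq2]
      _ ≤ ENNReal.ofReal α := by
          apply ENNReal.ofReal_le_ofReal
          rw [hAc]
          exact real_arith_V hα.1 hl1 hAl hAu huJ hJ
    refine bound_integral PA _ GV hGVmeas hα.1.le ?_ hGVle
    filter_upwards [hterm] with ω hω
    obtain ⟨hT1, hVcard, hVwit⟩ := giV_main (fun j n => llr (P0 j) (P1 j) n (ω j))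
      hJ hl1 hlu huJ ha0 hb0 A hAl hω
    rw [if_pos (le_trans hl1 (giR_ge _ _ _ _ _ _ _))]
    rcases (giD (fun j n => llr (P0 j) (P1 j) n (ω j)) l u a b c d \ A).eq_empty_or_nonempty
      with hD0 | hDne
    · rw [hD0]
      simp only [Finset.card_empty, Nat.cast_zero, zero_div]
      exact Set.indicator_nonneg (fun _ _ => zero_le_one) ω
    · obtain ⟨j, hjA, hcase⟩ := hVwit hDne
      have hmem : ω ∈ GV := by
        rcases hcase with hb' | ⟨k, hkA, hc'⟩
        · exact Set.mem_union_left _ (Set.mem_iUnion₂.mpr ⟨j, Finset.mem_compl.mpr hjA,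
            Set.mem_preimage.mpr (Set.mem_iUnion.mpr ⟨_, Set.mem_iUnion.mpr ⟨hT1, hb'⟩⟩)⟩)
        · exact Set.mem_union_right _ (Set.mem_iUnion₂.mpr ⟨j, Finset.mem_compl.mpr hjA,
            Set.mem_iUnion₂.mpr ⟨k, hkA, Set.mem_preimage.mpr
              (Set.mem_iUnion.mpr ⟨_, Set.mem_iUnion.mpr ⟨hT1, hc'⟩⟩)⟩⟩)
      rw [Set.indicator_of_mem hmem]
      have hRpos : 0 < giR (fun j n => llr (P0 j) (P1 j) n (ω j)) l u a b c d :=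
        lt_of_lt_of_le hl1 (giR_ge _ _ _ _ _ _ _)
      rw [div_le_one (by exact_mod_cast hRpos)]
      exact_mod_cast hVcard
  · -- ===== pFNR bound =====
    have huniv : {ω : ∀ j, ℕ → E j |
        giR (fun j n => llr (P0 j) (P1 j) n (ω j)) l u a b c d ≤ J - 1} = Set.univ :=
      Set.eq_univ_of_forall fun ω => le_trans (giR_le _ hlu.le _ _ _ _) huJ
    rw [huniv, measure_univ, ENNReal.toReal_one, div_one]
    set UA : (k : Fin J) → Set (ℕ → E k) := fun k =>
      ⋃ n, ⋃ _ : 1 ≤ n, {x | llr (P0 k) (P1 k) n x ≤ -a} with hUA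
    set UD : (j : Fin J) → (k : Fin J) → Set ((ℕ → E j) × (ℕ → E k)) := fun j k =>
      ⋃ n, ⋃ _ : 1 ≤ n, {w | d ≤ llr (P0 j) (P1 j) n w.1 - llr (P0 k) (P1 k) n w.2} with hUD
    have hUAmeas : ∀ k, MeasurableSet (UA k) := fun k =>
      MeasurableSet.iUnion fun n => MeasurableSet.iUnion fun _ =>
        measurableSet_le (measurable_llr _ _ n) measurable_const
    have hUDmeas : ∀ j k, MeasurableSet (UD j k) := fun j k =>
      MeasurableSet.iUnion fun n => MeasurableSet.iUnion fun _ =>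
        measurableSet_le measurable_const
          (((measurable_llr _ _ n).comp measurable_fst).sub
            ((measurable_llr _ _ n).comp measurable_snd))
    set GW : Set (∀ j, ℕ → E j) :=
      (⋃ k ∈ A, (fun ω : ∀ j, ℕ → E j => ω k) ⁻¹' UA k) ∪
        ⋃ j ∈ Aᶜ, ⋃ k ∈ A, (fun ω : ∀ j, ℕ → E j => (ω j, ω k)) ⁻¹' UD j k with hGWdef
    have hGWmeas : MeasurableSet GW := by
      refine MeasurableSet.union ?_ ?_
      · exact MeasurableSet.biUnion (Finset.countable_toSet _)
          fun k _ => (measurable_pi_apply k) (hUAmeas k)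
      · exact MeasurableSet.biUnion (Finset.countable_toSet _) fun j _ =>
          MeasurableSet.biUnion (Finset.countable_toSet _) fun k _ =>
            ((measurable_pi_apply j).prodMk (measurable_pi_apply k)) (hUDmeas j k)
    have hBWle : ∀ k ∈ A, PA ((fun ω : ∀ j, ℕ → E j => ω k) ⁻¹' UA k)
        ≤ ENNReal.ofReal (β / (J : ℝ)) := by
      intro k hk
      rw [← Measure.map_apply (measurable_pi_apply k) (hUAmeas k), hlaw k, if_pos hk]
      calc (P1 k) (UA k) ≤ ENNReal.ofReal (Real.exp (-a)) :=
          ville_down (P0 k) (P1 k) (habs k) a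
      _ = _ := by rw [hexpa]
    have hCWle : ∀ j ∈ Aᶜ, ∀ k ∈ A, PA ((fun ω : ∀ j, ℕ → E j => (ω j, ω k)) ⁻¹' UD j k)
        ≤ ENNReal.ofReal (β / ((u * J : ℕ) : ℝ)) := by
      intro j hj k hk
      have hjk : j ≠ k := fun h => (Finset.mem_compl.mp hj) (h ▸ hk)
      have hIF : IndepFun (fun ω : ∀ j, ℕ → E j => ω j) (fun ω => ω k) PA :=
        hind.indepFun hjk
      have hmap : PA.map (fun ω : ∀ j, ℕ → E j => (ω j, ω k)) = (P0 j).prod (P1 k) := by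
        rw [(indepFun_iff_map_prod_eq_prod_map_map (measurable_pi_apply j).aemeasurable
          (measurable_pi_apply k).aemeasurable).mp hIF, hlaw j, hlaw k,
          if_neg (Finset.mem_compl.mp hj), if_pos hk]
      rw [← Measure.map_apply ((measurable_pi_apply j).prodMk (measurable_pi_apply k))
        (hUDmeas j k), hmap]
      calc ((P0 j).prod (P1 k)) (UD j k) ≤ ENNReal.ofReal (Real.exp (-d)) :=
          ville_pair (P0 j) (P1 j) (P0 k) (P1 k) (habs j) (habs k) d
      _ = _ := by rw [hexpd]
    have hconv : ∀ (n : ℕ) (q : ℝ), (n : ENNReal) * ENNReal.ofReal q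
        = ENNReal.ofReal ((n : ℝ) * q) := by
      intro n q
      rw [ENNReal.ofReal_mul (Nat.cast_nonneg n), ENNReal.ofReal_natCast]
    have hAc : Aᶜ.card = J - A.card := by
      simp [Finset.card_compl]
    have hGWle : PA GW ≤ ENNReal.ofReal β := by
      calc PA GW ≤ PA (⋃ k ∈ A, (fun ω : ∀ j, ℕ → E j => ω k) ⁻¹' UA k)
          + PA (⋃ j ∈ Aᶜ, ⋃ k ∈ A, (fun ω : ∀ j, ℕ → E j => (ω j, ω k)) ⁻¹' UD j k) :=
        measure_union_le _ _
      _ ≤ (∑ _k ∈ A, ENNReal.ofReal (β / (J : ℝ)))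
          + ∑ j ∈ Aᶜ, ∑ _k ∈ A, ENNReal.ofReal (β / ((u * J : ℕ) : ℝ)) := by
          refine add_le_add ((measure_biUnion_finset_le _ _).trans (Finset.sum_le_sum hBWle))
            ((measure_biUnion_finset_le _ _).trans (Finset.sum_le_sum fun j hj =>
              (measure_biUnion_finset_le _ _).trans (Finset.sum_le_sum (hCWle j hj))))
      _ = (A.card : ENNReal) * ENNReal.ofReal (β / (J : ℝ))
          + (Aᶜ.card : ENNReal) * ((A.card : ENNReal)
            * ENNReal.ofReal (β / ((u * J : ℕ) : ℝ))) := by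
          simp [Finset.sum_const, nsmul_eq_mul, mul_assoc]
      _ = ENNReal.ofReal ((A.card : ℝ) * (β / (J : ℝ)))
          + ENNReal.ofReal ((Aᶜ.card : ℝ) * ((A.card : ℝ)
            * (β / ((u * J : ℕ) : ℝ)))) := by
          rw [hconv, hconv, hconv]
      _ = ENNReal.ofReal ((A.card : ℝ) * (β / (J : ℝ))
          + (Aᶜ.card : ℝ) * ((A.card : ℝ) * (β / ((u * J : ℕ) : ℝ)))) := by
          have hq1 : (0:ℝ) ≤ (A.card : ℝ) * (β / (J:ℝ)) :=
            mul_nonneg (Nat.cast_nonneg _) (div_nonneg hβ.1.le hJpos.le)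
          have hq2 : (0:ℝ) ≤ (Aᶜ.card : ℝ) * ((A.card : ℝ)
              * (β / ((u * J : ℕ) : ℝ))) :=
            mul_nonneg (Nat.cast_nonneg _) (mul_nonneg (Nat.cast_nonneg _)
              (div_nonneg hβ.1.le hcast2.le))
          rw [ENNReal.ofReal_add hq1 hq2]
      _ ≤ ENNReal.ofReal β := by
          apply ENNReal.ofReal_le_ofReal
          have harr := real_arith_W (J := J) (l := l) (u := u) (m := A.card)
            hβ.1 hl1 hAl hAu huJ hJ
          have hAc' : ((Aᶜ.card : ℕ) : ℝ) = ((J - A.card : ℕ) : ℝ) := by rw [hAc]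
          calc (A.card : ℝ) * (β / (J : ℝ))
              + (Aᶜ.card : ℝ) * ((A.card : ℝ) * (β / ((u * J : ℕ) : ℝ)))
              = (A.card : ℝ) * (β / (J : ℝ))
                + (A.card : ℝ) * (((J - A.card : ℕ) : ℝ) * (β / ((u * J : ℕ) : ℝ))) := by
                rw [hAc']; ring
          _ ≤ β := harr
    refine bound_integral PA _ GW hGWmeas hβ.1.le ?_ hGWle
    filter_upwards [hterm] with ω hω
    obtain ⟨hT1, hWcard, hWwit⟩ := giW_main (fun j n => llr (P0 j) (P1 j) n (ω j))
      hJ hl1 hlu huJ ha0 hb0 A hAu hω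
    rw [if_pos (le_trans (giR_le _ hlu.le _ _ _ _) huJ)]
    rcases (A \ giD (fun j n => llr (P0 j) (P1 j) n (ω j)) l u a b c d).eq_empty_or_nonempty
      with hD0 | hDne
    · rw [hD0]
      simp only [Finset.card_empty, Nat.cast_zero, zero_div]
      exact Set.indicator_nonneg (fun _ _ => zero_le_one) ω
    · obtain ⟨k, hkA, hcase⟩ := hWwit hDne
      have hmem : ω ∈ GW := by
        rcases hcase with ha' | ⟨j, hjA, hd'⟩
        · exact Set.mem_union_left _ (Set.mem_iUnion₂.mpr ⟨k, hkA,
            Set.mem_preimage.mpr (Set.mem_iUnion.mpr ⟨_, Set.mem_iUnion.mpr ⟨hT1, ha'⟩⟩)⟩)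
        · exact Set.mem_union_right _ (Set.mem_iUnion₂.mpr ⟨j, Finset.mem_compl.mpr hjA,
            Set.mem_iUnion₂.mpr ⟨k, hkA, Set.mem_preimage.mpr
              (Set.mem_iUnion.mpr ⟨_, Set.mem_iUnion.mpr ⟨hT1, hd'⟩⟩)⟩⟩)
      rw [Set.indicator_of_mem hmem]
      have hJRpos : 0 < J - giR (fun j n => llr (P0 j) (P1 j) n (ω j)) l u a b c d := by
        have := giR_le (fun j n => llr (P0 j) (P1 j) n (ω j)) hlu.le a b c d
        omega
      rw [div_le_one (by exact_mod_cast hJRpos)]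
      exact_mod_cast hWcard
end
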